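/- arXiv:2210.10989 — 5 statements merged into one kernel-verified Lean document; each statement's English description precedes it below -/
import Mathlib

section
/- Let φ(s) = (s²/(2(s - log(1+s))))^{1/2} as a formal power series with φ(0)=1. Then for all integers m ≥ 0 with m ≠ 1, the coefficient of s^{m−1} in φ(s)^{m+1}/(1+s) equals 0 (for m=0 interpret the coefficient of s^{−1} as 0). -/
open PowerSeries

/-- The formal power series `log(1+s) = ∑_{k≥1} (-1)^(k-1) s^k / k` over `ℚ`. -/
noncomputable def logOneAdd : ℚ⟦X⟧ :=
  PowerSeries.mk fun k => if k = 0 then 0 else (-1) ^ (k - 1) / (k : ℚ)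

lemma dlog : (1 + X) * d⁄dX ℚ logOneAdd = 1 := by
  ext n
  rw [add_mul, one_mul, map_add]
  cases n with
  | zero => simp [coeff_derivative, logOneAdd]
  | succ n =>
    rw [coeff_succ_X_mul, coeff_derivative, coeff_derivative, coeff_one]
    simp only [logOneAdd, coeff_mk, Nat.succ_ne_zero, if_false, Nat.add_sub_cancel]
    push_cast
    have h1 : (n:ℚ)+1 ≠ 0 := by positivity
    have h2 : (n:ℚ)+1+1 ≠ 0 := by positivity
    field_simp
    ring

lemma key (φ : ℚ⟦X⟧) (hφ : φ ^ 2 * (2 * (X - logOneAdd)) = X ^ 2) :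
    X * (1 + X) * d⁄dX ℚ φ + φ ^ 3 = (1 + X) * φ := by
  have hd := congrArg (d⁄dX ℚ) hφ
  have h2 : d⁄dX ℚ (2 : ℚ⟦X⟧) = 0 := by
    rw [(map_ofNat (C (R := ℚ)) 2).symm, derivative_C]
  rw [Derivation.leibniz, Derivation.leibniz, Derivation.leibniz_pow, Derivation.leibniz_pow,
    map_sub, derivative_X, h2] at hd
  simp only [smul_eq_mul, nsmul_eq_mul, Nat.cast_ofNat, pow_one, mul_one, mul_zero,
    add_zero] at hd
  have hX : (2 : ℚ⟦X⟧) * X ≠ 0 :=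
    mul_ne_zero (fun h => two_ne_zero (by simpa [map_ofNat] using congrArg (constantCoeff) h))
      X_ne_zero
  refine mul_left_cancel₀ hX ?_
  linear_combination ((1+X)*φ) * hd - (2*(1+X)*(d⁄dX ℚ φ)) * hφ + (2*φ^3) * dlog

/-- If `φ` is the formal power series square root (with constant term 1) of
`s²/(2(s − log(1+s)))`, then for `m ≠ 1` the coefficient of `s^(m-1)` in
`φ(s)^(m+1)/(1+s)` vanishes.  The coefficient of `s^(m-1)` is expressed as the
coefficient of `s^m` in `s · φ(s)^(m+1)/(1+s)`, which realizes the convention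
that the coefficient of `s^(-1)` (case `m = 0`) is `0`. -/
theorem stmt1 (φ : ℚ⟦X⟧) (hφ0 : constantCoeff φ = 1)
    (hφ : φ ^ 2 * (2 * (X - logOneAdd)) = X ^ 2)
    (m : ℕ) (hm : m ≠ 1) :
    coeff m (X * (φ ^ (m + 1) * (1 + X)⁻¹)) = 0 := by
  have hK := key φ hφ
  have h1 : (1 + X) * (1 + X)⁻¹ = (1 : ℚ⟦X⟧) :=
    PowerSeries.mul_inv_cancel _ (by simp)
  rcases m with _ | _ | k
  · simp
  · exact absurd rfl hm
  · set u : ℚ⟦X⟧ := (1 + X)⁻¹ with hu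
    have I0 : X * (φ ^ k * d⁄dX ℚ φ) + φ ^ (k + 3) * u = φ ^ (k + 1) := by
      linear_combination (φ^k * u) * hK - (X * φ^k * (d⁄dX ℚ φ) - φ^(k+1)) * h1
    have hc : coeff k (φ ^ k * d⁄dX ℚ φ) = coeff (k + 1) (φ ^ (k + 1)) := by
      have hp : d⁄dX ℚ (φ ^ (k + 1)) = (k + 1) • (φ ^ k * d⁄dX ℚ φ) := by
        rw [Derivation.leibniz_pow, Nat.add_sub_cancel, smul_eq_mul]
      have h := congrArg (coeff k) hp
      rw [coeff_derivative, map_nsmul, nsmul_eq_mul] at h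
      push_cast at h
      refine mul_left_cancel₀ (show ((k:ℚ)+1) ≠ 0 by positivity) ?_
      linear_combination -h
    have hI := congrArg (coeff (k + 1)) I0
    rw [map_add, coeff_succ_X_mul, hc] at hI
    have h0 : coeff (k + 1) (φ ^ (k + 3) * u) = 0 := by linarith [hI]
    show coeff (k + 1 + 1) (X * (φ ^ (k + 3) * u)) = 0
    rw [coeff_succ_X_mul]
    exact h0
end

section
/- Define g_m = [t^m] ((t²/2)/(e^t − 1 − t))^{(m+1)/2} and h_m = [s^m] ((s²/2)/(s − log(1+s)))^{(m+1)/2}, where the square roots are the formal power series with constant term 1. Then g_m = h_m for all m ≥ 0 with m ≠ 1. -/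
open PowerSeries

/-- The formal power series `(t²/2)/(eᵗ − 1 − t) = (∑_{j≥0} 2 t^j/(j+2)!)⁻¹` over `ℚ`,
with constant term 1. -/
noncomputable def ratioG : ℚ⟦X⟧ :=
  (PowerSeries.mk fun j => 2 / ((j + 2).factorial : ℚ))⁻¹

/-- The formal power series `(s²/2)/(s − log(1+s)) = (∑_{j≥0} 2(-1)^j s^j/(j+2))⁻¹`
over `ℚ`, with constant term 1. -/
noncomputable def ratioH : ℚ⟦X⟧ :=
  (PowerSeries.mk fun j => 2 * (-1) ^ j / ((j : ℚ) + 2))⁻¹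

namespace Stmt2Aux

open Finset

/-- Composition `H ∘ φ` of formal power series (sensible when `φ` has zero constant term). -/
noncomputable def comp (H φ : ℚ⟦X⟧) : ℚ⟦X⟧ :=
  PowerSeries.mk fun n => ∑ k ∈ range (n + 1), coeff k H * coeff n (φ ^ k)

lemma coeff_pow_eq_zero {φ : ℚ⟦X⟧} (hφ : constantCoeff φ = 0) {n k : ℕ} (h : n < k) :
    coeff n (φ ^ k) = 0 := by
  have hd : (X : ℚ⟦X⟧) ^ k ∣ φ ^ k :=
    pow_dvd_pow_of_dvd (PowerSeries.X_dvd_iff.mpr hφ) k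
  exact (PowerSeries.X_pow_dvd_iff.mp hd) n h

lemma coeff_comp {φ : ℚ⟦X⟧} (hφ : constantCoeff φ = 0) (H : ℚ⟦X⟧) {n N : ℕ} (hN : n < N) :
    coeff n (comp H φ) = ∑ k ∈ range N, coeff k H * coeff n (φ ^ k) := by
  rw [comp, coeff_mk]
  refine Finset.sum_subset (by intro x hx; simp only [mem_range] at *; omega) ?_
  intro k _ hk
  simp only [mem_range, not_lt] at hk
  rw [coeff_pow_eq_zero hφ (by omega), mul_zero]

lemma coeff_mul_comp {φ : ℚ⟦X⟧} (hφ : constantCoeff φ = 0) (g H : ℚ⟦X⟧) {n N : ℕ}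
    (hN : n < N) :
    coeff n (g * comp H φ) = ∑ k ∈ range N, coeff k H * coeff n (g * φ ^ k) := by
  rw [coeff_mul]
  have h1 : ∀ p ∈ antidiagonal n,
      coeff p.1 g * coeff p.2 (comp H φ)
        = ∑ k ∈ range N, coeff k H * (coeff p.1 g * coeff p.2 (φ ^ k)) := by
    rintro ⟨i, j⟩ hp
    rw [HasAntidiagonal.mem_antidiagonal] at hp
    rw [coeff_comp hφ H (show j < N by omega), Finset.mul_sum]
    exact Finset.sum_congr rfl fun k _ => by ring
  rw [Finset.sum_congr rfl h1, Finset.sum_comm]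
  exact Finset.sum_congr rfl fun k _ => by rw [coeff_mul, Finset.mul_sum]

lemma comp_one (φ : ℚ⟦X⟧) : comp 1 φ = 1 := by
  ext n
  rw [comp, coeff_mk]
  rw [Finset.sum_eq_single 0]
  · simp
  · intro k _ hk
    rw [coeff_one, if_neg hk, zero_mul]
  · intro h; simp at h

lemma comp_X {φ : ℚ⟦X⟧} (hφ : constantCoeff φ = 0) : comp X φ = φ := by
  ext n
  rw [comp, coeff_mk]
  rcases n with _ | n
  · simp [coeff_X, hφ]
  · rw [Finset.sum_eq_single 1]
    · simp [coeff_X]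
    · intro k _ hk; rw [coeff_X, if_neg hk, zero_mul]
    · intro h; simp only [mem_range] at h; omega

lemma comp_add (φ A B : ℚ⟦X⟧) : comp (A + B) φ = comp A φ + comp B φ := by
  ext n
  simp only [comp, coeff_mk, map_add, add_mul, Finset.sum_add_distrib]

lemma comp_mul {φ : ℚ⟦X⟧} (hφ : constantCoeff φ = 0) (A B : ℚ⟦X⟧) :
    comp (A * B) φ = comp A φ * comp B φ := by
  ext n
  rw [coeff_comp hφ (A * B) (show n < n + 1 by omega)]
  have hrhs : coeff n (comp A φ * comp B φ)
      = ∑ j ∈ range (n + 1), coeff j B *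
          ∑ i ∈ range (n + 1), coeff i A * coeff n (φ ^ j * φ ^ i) := by
    rw [coeff_mul_comp hφ (comp A φ) B (show n < n + 1 by omega)]
    refine Finset.sum_congr rfl fun j _ => ?_
    rw [mul_comm (comp A φ) (φ ^ j), coeff_mul_comp hφ (φ ^ j) A (show n < n + 1 by omega)]
  rw [hrhs]
  have key : ∀ F : ℕ → ℕ → ℚ, (∀ i j, n < i + j → F i j = 0) →
      ∑ k ∈ range (n + 1), ∑ p ∈ antidiagonal k, F p.1 p.2
        = ∑ i ∈ range (n + 1), ∑ j ∈ range (n + 1), F i j := by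
    intro F hF
    have h2 : ∀ k ∈ range (n + 1), ∑ p ∈ antidiagonal k, F p.1 p.2
        = ∑ p ∈ (range (n + 1) ×ˢ range (n + 1)), if p.1 + p.2 = k then F p.1 p.2 else 0 := by
      intro k hk
      simp only [mem_range] at hk
      rw [← Finset.sum_filter]
      refine (Finset.sum_congr ?_ fun _ _ => rfl)
      ext ⟨i, j⟩
      simp only [HasAntidiagonal.mem_antidiagonal, mem_filter, mem_product, mem_range]
      constructor
      · intro h; exact ⟨⟨by omega, by omega⟩, h⟩
      · exact fun h => h.2
    rw [Finset.sum_congr rfl h2, Finset.sum_comm]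
    have h3 : ∀ p ∈ (range (n + 1) ×ˢ range (n + 1)),
        (∑ k ∈ range (n + 1), if p.1 + p.2 = k then F p.1 p.2 else 0) = F p.1 p.2 := by
      rintro ⟨i, j⟩ hp
      by_cases hij : i + j ≤ n
      · rw [Finset.sum_eq_single (i + j)]
        · simp
        · intro k _ hk; exact if_neg fun h => hk h.symm
        · intro h; simp only [mem_range] at h; omega
      · simp only
        rw [hF i j (by omega)]
        simp
    rw [Finset.sum_congr rfl h3, Finset.sum_product]
  have hl : ∀ k ∈ range (n + 1), coeff k (A * B) * coeff n (φ ^ k)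
      = ∑ p ∈ antidiagonal k, coeff p.1 A * coeff p.2 B * coeff n (φ ^ (p.1 + p.2)) := by
    intro k _
    rw [coeff_mul, Finset.sum_mul]
    refine Finset.sum_congr rfl fun ⟨i, j⟩ hp => ?_
    rw [HasAntidiagonal.mem_antidiagonal] at hp
    rw [hp]
  calc ∑ k ∈ range (n + 1), coeff k (A * B) * coeff n (φ ^ k)
      = ∑ k ∈ range (n + 1), ∑ p ∈ antidiagonal k,
          coeff p.1 A * coeff p.2 B * coeff n (φ ^ (p.1 + p.2)) :=
        Finset.sum_congr rfl hl
    _ = ∑ i ∈ range (n + 1), ∑ j ∈ range (n + 1),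
          coeff i A * coeff j B * coeff n (φ ^ (i + j)) :=
        key (fun i j => coeff i A * coeff j B * coeff n (φ ^ (i + j)))
          (fun i j h => by rw [coeff_pow_eq_zero hφ h, mul_zero])
    _ = ∑ j ∈ range (n + 1), coeff j B *
          ∑ i ∈ range (n + 1), coeff i A * coeff n (φ ^ j * φ ^ i) := by
        rw [Finset.sum_comm]
        refine Finset.sum_congr rfl fun j _ => ?_
        rw [Finset.mul_sum]
        refine Finset.sum_congr rfl fun i _ => ?_
        rw [pow_add]
        ring

lemma comp_C {φ : ℚ⟦X⟧} (a : ℚ) : comp (C a) φ = C a := by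
  ext n
  rw [comp, coeff_mk, Finset.sum_eq_single 0]
  · simp [coeff_C]
  · intro k _ hk
    rw [coeff_C, if_neg hk, zero_mul]
  · intro h; simp at h

lemma constantCoeff_comp (H φ : ℚ⟦X⟧) :
    constantCoeff (comp H φ) = constantCoeff H := by
  have h0 : coeff 0 (comp H φ) = coeff 0 H := by
    rw [comp, coeff_mk]
    simp
  simpa [coeff_zero_eq_constantCoeff] using h0

/-- `comp · φ` as a ring homomorphism. -/
noncomputable def compHom (φ : ℚ⟦X⟧) (hφ : constantCoeff φ = 0) : ℚ⟦X⟧ →+* ℚ⟦X⟧ where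
  toFun H := comp H φ
  map_one' := comp_one φ
  map_mul' := comp_mul hφ
  map_zero' := by
    ext n; simp only [comp, coeff_mk]; simp
  map_add' A B := comp_add φ A B

lemma compHom_apply {φ : ℚ⟦X⟧} (hφ : constantCoeff φ = 0) (H : ℚ⟦X⟧) :
    compHom φ hφ H = comp H φ := rfl

/-- Chain rule for composition of formal power series. -/
lemma derivative_comp {φ : ℚ⟦X⟧} (hφ : constantCoeff φ = 0) (H : ℚ⟦X⟧) :
    d⁄dX ℚ (comp H φ) = comp (d⁄dX ℚ H) φ * d⁄dX ℚ φ := by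
  ext n
  rw [coeff_derivative, coeff_comp hφ H (show n + 1 < n + 2 by omega)]
  rw [mul_comm (comp (d⁄dX ℚ H) φ) (d⁄dX ℚ φ),
    coeff_mul_comp hφ (d⁄dX ℚ φ) (d⁄dX ℚ H) (show n < n + 1 by omega)]
  rw [Finset.sum_range_succ' (fun k => coeff k H * coeff (n + 1) (φ ^ k)) (n + 1)]
  have h0 : coeff 0 H * coeff (n + 1) (φ ^ 0) = 0 := by
    simp [coeff_one]
  rw [h0, add_zero, Finset.sum_mul]
  refine Finset.sum_congr rfl fun k _ => ?_
  have hder : d⁄dX ℚ (φ ^ (k + 1)) = (k + 1 : ℕ) • (φ ^ k • d⁄dX ℚ φ) := by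
    simpa using Derivation.leibniz_pow (PowerSeries.derivative ℚ) (a := φ) (k + 1)
  have h1 : coeff (n + 1) (φ ^ (k + 1)) * ((n : ℚ) + 1)
      = ((k : ℚ) + 1) * coeff n (d⁄dX ℚ φ * φ ^ k) := by
    have h2 := congrArg (coeff n) hder
    rw [coeff_derivative, nsmul_eq_mul, smul_eq_mul, ← map_natCast (C (R := ℚ)) (k + 1),
      coeff_C_mul] at h2
    rw [h2]
    push_cast
    rw [mul_comm (d⁄dX ℚ φ) (φ ^ k)]
  rw [coeff_derivative]
  push_cast
  calc coeff (k + 1) H * coeff (n + 1) (φ ^ (k + 1)) * ((n : ℚ) + 1)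
      = coeff (k + 1) H * (coeff (n + 1) (φ ^ (k + 1)) * ((n : ℚ) + 1)) := by ring
    _ = coeff (k + 1) H * (((k : ℚ) + 1) * coeff n (d⁄dX ℚ φ * φ ^ k)) := by rw [h1]
    _ = coeff (k + 1) H * ((k : ℚ) + 1) * coeff n (d⁄dX ℚ φ * φ ^ k) := by ring

/-- `E = (eᵗ-1)/t`. -/
noncomputable def Es : ℚ⟦X⟧ := PowerSeries.mk fun j => 1 / ((j + 1).factorial : ℚ)

/-- `φ = eᵗ - 1`. -/
noncomputable def phi : ℚ⟦X⟧ := X * Es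

/-- `C = 2(eᵗ-1-t)/t²`. -/
noncomputable def Cs : ℚ⟦X⟧ := PowerSeries.mk fun j => 2 / ((j + 2).factorial : ℚ)

/-- `D = 2(s - log(1+s))/s²`. -/
noncomputable def Ds : ℚ⟦X⟧ := PowerSeries.mk fun j => 2 * (-1) ^ j / ((j : ℚ) + 2)

/-- `L = log(1+s)`. -/
noncomputable def Ls : ℚ⟦X⟧ :=
  PowerSeries.mk fun j => if j = 0 then 0 else (-1) ^ (j + 1) / (j : ℚ)

lemma hE0 : constantCoeff Es = 1 := by
  rw [Es, constantCoeff_mk]; norm_num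

lemma hCs0 : constantCoeff Cs = 1 := by
  rw [Cs, constantCoeff_mk]; norm_num

lemma hDs0 : constantCoeff Ds = 1 := by
  rw [Ds, constantCoeff_mk]; norm_num

lemma hphi0 : constantCoeff phi = 0 := by
  rw [phi, map_mul, constantCoeff_X, zero_mul]

lemma coeff_phi (n : ℕ) : coeff (n + 1) phi = 1 / ((n + 1).factorial : ℚ) := by
  rw [phi, coeff_succ_X_mul, Es, coeff_mk]

lemma coeff_phi_zero : coeff 0 phi = 0 := by
  rw [coeff_zero_eq_constantCoeff_apply, hphi0]

/-- `φ' = 1 + φ`. -/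
lemma f2 : d⁄dX ℚ phi = 1 + phi := by
  ext n
  rw [coeff_derivative, map_add]
  rcases n with _ | n
  · rw [coeff_phi 0, coeff_phi_zero, coeff_one]
    simp
  · rw [coeff_phi (n + 1), coeff_phi n, coeff_one, if_neg (by omega)]
    rw [Nat.factorial_succ (n + 1)]
    have h1 : ((n + 1).factorial : ℚ) ≠ 0 := Nat.cast_ne_zero.mpr (Nat.factorial_ne_zero _)
    push_cast
    field_simp
    ring

/-- `t²·C = 2(φ - t)`. -/
lemma f1 : X ^ 2 * Cs = C (2 : ℚ) * (phi - X) := by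
  ext n
  rw [coeff_C_mul, map_sub]
  rcases n with _ | n
  · rw [coeff_zero_eq_constantCoeff_apply, map_mul, map_pow, constantCoeff_X]
    norm_num [coeff_zero_eq_constantCoeff_apply, hphi0, constantCoeff_X]
  · rcases n with _ | n
    · have hl : coeff 1 (X ^ 2 * Cs) = 0 := by
        rw [coeff_mul, Finset.sum_eq_zero]
        rintro ⟨i, j⟩ hp
        rw [HasAntidiagonal.mem_antidiagonal] at hp
        have hi : coeff i ((X : ℚ⟦X⟧) ^ 2) = 0 := by
          rw [coeff_X_pow, if_neg (by omega)]
        rw [hi, zero_mul]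
      rw [hl, coeff_phi 0, coeff_X]
      norm_num
    · rw [show n + 1 + 1 = n + 2 from rfl, coeff_X_pow_mul, Cs, coeff_mk,
        coeff_phi (n + 1), coeff_X, if_neg (by omega)]
      ring

/-- `t²·D = 2(t - L)`. -/
lemma f5 : X ^ 2 * Ds = C (2 : ℚ) * (X - Ls) := by
  ext n
  rw [coeff_C_mul, map_sub]
  rcases n with _ | n
  · rw [coeff_zero_eq_constantCoeff_apply, map_mul, map_pow, constantCoeff_X]
    norm_num [coeff_zero_eq_constantCoeff_apply, constantCoeff_X, Ls, constantCoeff_mk]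
  · rcases n with _ | n
    · have hl : coeff 1 (X ^ 2 * Ds) = 0 := by
        rw [coeff_mul, Finset.sum_eq_zero]
        rintro ⟨i, j⟩ hp
        rw [HasAntidiagonal.mem_antidiagonal] at hp
        have hi : coeff i ((X : ℚ⟦X⟧) ^ 2) = 0 := by
          rw [coeff_X_pow, if_neg (by omega)]
        rw [hi, zero_mul]
      norm_num [hl, coeff_X, Ls, coeff_mk]
    · rw [show n + 1 + 1 = n + 2 from rfl, coeff_X_pow_mul, Ds, coeff_mk,
        coeff_X, if_neg (by omega), Ls, coeff_mk, if_neg (by omega)]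
      push_cast
      have h2 : ((n : ℚ) + 2) ≠ 0 := by positivity
      field_simp
      ring

/-- `L' = 1/(1+s)`, in the form `L'·(1+s) = 1`. -/
lemma f3 : d⁄dX ℚ Ls * (1 + X) = 1 := by
  have hdL : d⁄dX ℚ Ls = PowerSeries.mk fun n => (-1 : ℚ) ^ n := by
    ext n
    rw [coeff_derivative, Ls, coeff_mk, coeff_mk, if_neg (by omega)]
    have h1 : ((n : ℚ) + 1) ≠ 0 := by positivity
    push_cast
    field_simp
    ring
  rw [hdL]
  ext n
  rw [mul_add, mul_one, map_add, coeff_mk, coeff_one]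
  rcases n with _ | n
  · rw [coeff_zero_mul_X]
    norm_num
  · rw [coeff_succ_mul_X, coeff_mk, if_neg (by omega)]
    ring

lemma comp_pow {φ : ℚ⟦X⟧} (hφ : constantCoeff φ = 0) (f : ℚ⟦X⟧) (k : ℕ) :
    comp (f ^ k) φ = comp f φ ^ k :=
  map_pow (compHom φ hφ) f k

lemma comp_sub {φ : ℚ⟦X⟧} (hφ : constantCoeff φ = 0) (f g : ℚ⟦X⟧) :
    comp (f - g) φ = comp f φ - comp g φ :=
  map_sub (compHom φ hφ) f g

/-- `log(1 + (eᵗ - 1)) = t`. -/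
lemma comp_Ls : comp Ls phi = X := by
  have hinv : comp (d⁄dX ℚ Ls) phi * (1 + phi) = 1 := by
    have h := congrArg (fun f => comp f phi) f3
    rw [comp_mul hphi0, comp_add, comp_one, comp_X hphi0] at h
    exact h
  have hd : d⁄dX ℚ (comp Ls phi) = 1 := by
    rw [derivative_comp hphi0, f2, hinv]
  ext n
  rcases n with _ | n
  · rw [coeff_zero_eq_constantCoeff_apply, coeff_zero_eq_constantCoeff_apply,
      constantCoeff_comp, constantCoeff_X, Ls, constantCoeff_mk]
    simp
  · have h2 := congrArg (coeff n) hd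
    rw [coeff_derivative, coeff_one] at h2
    rw [coeff_X]
    rcases n with _ | n
    · simpa using h2
    · rw [if_neg (by omega)]
      rw [if_neg (by omega)] at h2
      have hn : ((n : ℚ) + 1 + 1) ≠ 0 := by positivity
      rcases mul_eq_zero.mp h2 with h | h
      · exact h
      · exfalso; apply hn; push_cast at h ⊢; linarith

/-- `E² · (D ∘ φ) = C`. -/
lemma Es_sq_comp_Ds : Es ^ 2 * comp Ds phi = Cs := by
  have h1 : comp (X ^ 2 * Ds) phi = phi ^ 2 * comp Ds phi := by
    rw [comp_mul hphi0, comp_pow hphi0, comp_X hphi0]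
  have h2 : comp (C (2 : ℚ) * (X - Ls)) phi = C (2 : ℚ) * (phi - X) := by
    rw [comp_mul hphi0, comp_C, comp_sub hphi0, comp_X hphi0, comp_Ls]
  have h3 : phi ^ 2 * comp Ds phi = X ^ 2 * Cs := by
    rw [← h1, f5, h2, ← f1]
  have h4 : X ^ 2 * (Es ^ 2 * comp Ds phi) = X ^ 2 * Cs := by
    rw [← h3, phi, mul_pow]; ring
  exact mul_left_cancel₀ (pow_ne_zero 2 PowerSeries.X_ne_zero) h4

lemma hEinv : Es * Es⁻¹ = 1 :=
  PowerSeries.mul_inv_cancel Es (by rw [hE0]; norm_num)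

lemma hEI0 : constantCoeff (Es⁻¹) = 1 := by
  rw [PowerSeries.constantCoeff_inv, hE0]; norm_num

lemma hdEI : d⁄dX ℚ (Es⁻¹) = -((Es⁻¹) ^ 2 * d⁄dX ℚ Es) := by
  have h := congrArg (d⁄dX ℚ) hEinv
  rw [Derivation.leibniz, smul_eq_mul, smul_eq_mul, Derivation.map_one_eq_zero] at h
  linear_combination (Es⁻¹) * h - (d⁄dX ℚ (Es⁻¹)) * hEinv

lemma dphi_eq : d⁄dX ℚ phi = Es + X * d⁄dX ℚ Es := by
  rw [phi, Derivation.leibniz, smul_eq_mul, smul_eq_mul, derivative_X, mul_one]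
  ring

/-- The residue computation: `[t^m] (E^{-(m+1)} φ' φ^k) = δ_{km}` for `k ≤ m`. -/
lemma residue_lemma (m k : ℕ) (hk : k ≤ m) :
    coeff m ((Es⁻¹) ^ (m + 1) * d⁄dX ℚ phi * phi ^ k) = if k = m then 1 else 0 := by
  obtain ⟨r, rfl⟩ : ∃ r, m = k + r := ⟨m - k, by omega⟩
  have hphipow : phi ^ k = X ^ k * Es ^ k := by rw [phi, mul_pow]
  have hEpow : (Es⁻¹ : ℚ⟦X⟧) ^ (k + r + 1) * Es ^ k = (Es⁻¹) ^ (r + 1) := by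
    rw [show k + r + 1 = r + 1 + k by omega, pow_add, mul_assoc, ← mul_pow,
      mul_comm (Es⁻¹) Es, hEinv, one_pow, mul_one]
  have hsplit : (Es⁻¹) ^ (k + r + 1) * d⁄dX ℚ phi * phi ^ k
      = X ^ k * ((Es⁻¹) ^ (r + 1) * d⁄dX ℚ phi) := by
    rw [hphipow, ← hEpow]; ring
  rw [hsplit, show k + r = r + k by omega, coeff_X_pow_mul]
  rcases r with _ | j
  · rw [if_pos (by omega : k = 0 + k)]
    rw [coeff_zero_eq_constantCoeff_apply, map_mul, map_pow, hEI0, f2, map_add,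
      constantCoeff_one, hphi0, one_pow]
    norm_num
  · rw [if_neg (by omega)]
    -- goal: coeff (j+1) (EI^(j+2) * dphi) = 0
    have hexpand : (Es⁻¹ : ℚ⟦X⟧) ^ (j + 2) * d⁄dX ℚ phi
        = (Es⁻¹) ^ (j + 1) + X * ((Es⁻¹) ^ (j + 2) * d⁄dX ℚ Es) := by
      rw [dphi_eq, mul_add]
      have : (Es⁻¹ : ℚ⟦X⟧) ^ (j + 2) * Es = (Es⁻¹) ^ (j + 1) := by
        rw [pow_succ, mul_assoc, mul_comm (Es⁻¹) Es, hEinv, mul_one]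
      rw [this]; ring
    rw [hexpand, map_add, coeff_succ_X_mul]
    have hdy : d⁄dX ℚ ((Es⁻¹ : ℚ⟦X⟧) ^ (j + 1))
        = -(C ((j : ℚ) + 1) * ((Es⁻¹) ^ (j + 2) * d⁄dX ℚ Es)) := by
      have h := Derivation.leibniz_pow (PowerSeries.derivative ℚ) (a := (Es⁻¹ : ℚ⟦X⟧)) (j + 1)
      rw [hdEI] at h
      rw [h]
      simp only [smul_eq_mul, nsmul_eq_mul]
      rw [← map_natCast (PowerSeries.C (R := ℚ)) (j + 1)]
      push_cast
      ring_nf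
    have h2 := congrArg (coeff j) hdy
    rw [coeff_derivative, map_neg, coeff_C_mul] at h2
    have hj : ((j : ℚ) + 1) ≠ 0 := by positivity
    have h3 : coeff j ((Es⁻¹ : ℚ⟦X⟧) ^ (j + 2) * d⁄dX ℚ Es)
        = -coeff (j + 1) ((Es⁻¹ : ℚ⟦X⟧) ^ (j + 1)) := by
      have h4 : ((j : ℚ) + 1) * coeff j ((Es⁻¹ : ℚ⟦X⟧) ^ (j + 2) * d⁄dX ℚ Es)
          = ((j : ℚ) + 1) * (-coeff (j + 1) ((Es⁻¹ : ℚ⟦X⟧) ^ (j + 1))) := by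
        linarith [h2]
      exact mul_left_cancel₀ hj h4
    rw [h3]
    ring

lemma hCsne : Cs ≠ 0 := fun h => by
  have := hCs0; rw [h] at this; simp at this

/-- The key cancellation: `[t^m](G·φ) = 0` for `m ≠ 1` when `G²·C^{m+1} = 1`. -/
lemma coeff_G_phi (m : ℕ) (hm : m ≠ 1) (G : ℚ⟦X⟧) (hG0 : constantCoeff G = 1)
    (hGC : G ^ 2 * Cs ^ (m + 1) = 1) : coeff m (G * phi) = 0 := by
  have hGne : G ≠ 0 := fun h => by rw [h] at hG0; simp at hG0
  have htwo : (C (2 : ℚ) : ℚ⟦X⟧) = 2 := map_ofNat (C (R := ℚ)) 2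
  rcases m with _ | _ | r
  · rw [coeff_zero_eq_constantCoeff_apply, map_mul, hphi0, mul_zero]
  · exact absurd rfl hm
  · -- m = r + 2
    have hd1 : 2 * X * Cs + X ^ 2 * d⁄dX ℚ Cs = 2 * phi := by
      have hD2 : d⁄dX ℚ (2 : ℚ⟦X⟧) = 0 := by rw [← htwo, derivative_C]
      have h := congrArg (d⁄dX ℚ) f1
      simp only [Derivation.leibniz, Derivation.leibniz_pow, smul_eq_mul, nsmul_eq_mul,
        map_sub, derivative_X, derivative_C, f2, htwo, hD2, mul_zero, add_zero] at h
      push_cast at h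
      linear_combination h
    have hGCd := congrArg (d⁄dX ℚ) hGC
    simp only [Derivation.leibniz, Derivation.leibniz_pow, smul_eq_mul, nsmul_eq_mul,
      Derivation.map_one_eq_zero] at hGCd
    push_cast at hGCd
    have hfac : G * Cs ^ (r + 2) *
        ((((r : ℚ⟦X⟧)) + 3) * G * d⁄dX ℚ Cs + 2 * Cs * d⁄dX ℚ G) = 0 := by
      linear_combination hGCd
    have hcancel : (((r : ℚ⟦X⟧)) + 3) * G * d⁄dX ℚ Cs + 2 * Cs * d⁄dX ℚ G = 0 := by
      rcases mul_eq_zero.mp hfac with h | h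
      · rcases mul_eq_zero.mp h with h' | h'
        · exact absurd h' hGne
        · exact absurd h' (pow_ne_zero _ hCsne)
      · exact h
    have hdP : d⁄dX ℚ (G * Cs) = G * d⁄dX ℚ Cs + Cs * d⁄dX ℚ G := by
      rw [Derivation.leibniz, smul_eq_mul, smul_eq_mul]
    have key : ((r : ℚ⟦X⟧) + 3) * (((r : ℚ⟦X⟧) + 1) * (2 * (G * phi)))
        = ((r : ℚ⟦X⟧) + 3) * (((r : ℚ⟦X⟧) + 1) * (2 * (X * (G * Cs))))
          - ((r : ℚ⟦X⟧) + 3) * (2 * (X ^ 2 * d⁄dX ℚ (G * Cs))) := by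
      linear_combination (-(((r : ℚ⟦X⟧) + 1) * ((r : ℚ⟦X⟧) + 3) * G)) * hd1
        + (((r : ℚ⟦X⟧) + 3) * X ^ 2) * hcancel
        + (2 * ((r : ℚ⟦X⟧) + 3) * X ^ 2) * hdP
    have hc3 : ((r : ℚ⟦X⟧) + 3) = C ((r : ℚ) + 3) := by
      rw [map_add, map_natCast, map_ofNat]
    have hc1 : ((r : ℚ⟦X⟧) + 1) = C ((r : ℚ) + 1) := by
      rw [map_add, map_natCast, map_one]
    have hco := congrArg (coeff (r + 2)) key
    rw [hc3, hc1, ← htwo] at hco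
    simp only [coeff_C_mul, map_sub] at hco
    rw [coeff_succ_X_mul] at hco
    rw [show r + 2 = r + 2 from rfl, coeff_X_pow_mul, coeff_derivative] at hco
    have hx : (((r : ℚ) + 3) * (((r : ℚ) + 1) * 2)) * coeff (r + 2) (G * phi) = 0 := by
      linear_combination hco
    rcases mul_eq_zero.mp hx with h | h
    · exfalso
      have : ((r : ℚ) + 3) * (((r : ℚ) + 1) * 2) ≠ 0 := by positivity
      exact this h
    · exact h

end Stmt2Aux

set_option maxHeartbeats 800000

open Stmt2Aux in
/-- With `G = ((t²/2)/(eᵗ−1−t))^((m+1)/2)` and `H = ((s²/2)/(s−log(1+s)))^((m+1)/2)`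
(the square roots with constant term 1), we have `[t^m] G = [s^m] H` for `m ≠ 1`. -/
theorem stmt2 (m : ℕ) (hm : m ≠ 1) (G H : ℚ⟦X⟧)
    (hG0 : constantCoeff G = 1) (hG : G ^ 2 = ratioG ^ (m + 1))
    (hH0 : constantCoeff H = 1) (hH : H ^ 2 = ratioH ^ (m + 1)) :
    coeff m G = coeff m H := by
  have hrG : ratioG = Cs⁻¹ := rfl
  have hrH : ratioH = Ds⁻¹ := rfl
  have hCG : ratioG * Cs = 1 := by
    rw [hrG]; exact PowerSeries.inv_mul_cancel Cs (by rw [hCs0]; norm_num)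
  have hDH : ratioH * Ds = 1 := by
    rw [hrH]; exact PowerSeries.inv_mul_cancel Ds (by rw [hDs0]; norm_num)
  have hDcomp_ne : comp Ds phi ≠ 0 := by
    intro h
    have h2 := constantCoeff_comp Ds phi
    rw [h, hDs0] at h2
    simp at h2
  have hH1 : comp ratioH phi * comp Ds phi = 1 := by
    rw [← comp_mul hphi0, hDH, comp_one]
  have hH2 : ratioG * Es ^ 2 * comp Ds phi = 1 := by
    calc ratioG * Es ^ 2 * comp Ds phi = ratioG * (Es ^ 2 * comp Ds phi) := by ring
      _ = ratioG * Cs := by rw [Es_sq_comp_Ds]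
      _ = 1 := hCG
  have hcompH : comp ratioH phi = ratioG * Es ^ 2 :=
    mul_right_cancel₀ hDcomp_ne (hH1.trans hH2.symm)
  have hsq : comp H phi ^ 2 = (G * Es ^ (m + 1)) ^ 2 := by
    calc comp H phi ^ 2 = comp (H ^ 2) phi := (comp_pow hphi0 H 2).symm
      _ = comp (ratioH ^ (m + 1)) phi := by rw [hH]
      _ = (ratioG * Es ^ 2) ^ (m + 1) := by rw [comp_pow hphi0, hcompH]
      _ = (G * Es ^ (m + 1)) ^ 2 := by
          rw [mul_pow, mul_pow, ← hG, ← pow_mul, ← pow_mul, Nat.mul_comm]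
  have hA0 : constantCoeff (comp H phi) = 1 := by rw [constantCoeff_comp, hH0]
  have hB0 : constantCoeff (G * Es ^ (m + 1)) = 1 := by
    rw [map_mul, map_pow, hG0, hE0, one_pow, one_mul]
  have hKB : comp H phi = G * Es ^ (m + 1) := by
    have hz : (comp H phi - G * Es ^ (m + 1)) * (comp H phi + G * Es ^ (m + 1)) = 0 := by
      linear_combination hsq
    rcases mul_eq_zero.mp hz with h | h
    · exact sub_eq_zero.mp h
    · exfalso
      have h2 := congrArg (constantCoeff) h
      rw [map_add, hA0, hB0] at h2
      norm_num at h2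
  have hsum : coeff m ((Es⁻¹) ^ (m + 1) * d⁄dX ℚ phi * comp H phi) = coeff m H := by
    rw [coeff_mul_comp hphi0 ((Es⁻¹) ^ (m + 1) * d⁄dX ℚ phi) H (show m < m + 1 by omega)]
    rw [Finset.sum_eq_single m]
    · rw [residue_lemma m m le_rfl, if_pos rfl, mul_one]
    · intro k hk hkm
      rw [residue_lemma m k (by simp only [Finset.mem_range] at hk; omega), if_neg hkm,
        mul_zero]
    · intro h; simp at h
  have h6 : (Es⁻¹ : ℚ⟦X⟧) ^ (m + 1) * Es ^ (m + 1) = 1 := by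
    rw [← mul_pow, mul_comm, hEinv, one_pow]
  have hfin : (Es⁻¹) ^ (m + 1) * d⁄dX ℚ phi * comp H phi = G * d⁄dX ℚ phi := by
    rw [hKB]
    linear_combination (G * d⁄dX ℚ phi) * h6
  have hGCpow : G ^ 2 * Cs ^ (m + 1) = 1 := by
    rw [hG, hrG, ← mul_pow, PowerSeries.inv_mul_cancel Cs (by rw [hCs0]; norm_num), one_pow]
  have hGphi : coeff m (G * phi) = 0 := coeff_G_phi m hm G hG0 hGCpow
  rw [← hsum, hfin, f2, mul_add, mul_one, map_add, hGphi, add_zero]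
end

section
/- Define h_m = [y^m] (y²/(−log(1−y²)))^{(m+1)/2} (square-root branch with constant term 1). Then h_m = [v^m] e^v · (v²/(−log(2−e^v) − v))^{(m+1)/2}, for every m ≥ 0. -/
open PowerSeries

/-- Composition `g ∘ f` of formal power series, for `f` with zero constant term. -/
noncomputable def psComp {R : Type*} [CommSemiring R] (g f : R⟦X⟧) : R⟦X⟧ :=
  PowerSeries.mk fun n => ∑ k ∈ Finset.range (n + 1), coeff k g * coeff n (f ^ k)

/-- `y²/(−log(1−y²)) = (∑_{k≥0} y^{2k}/(k+1))⁻¹`, a power series with constant term 1. -/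
noncomputable def ratioQ : ℚ⟦X⟧ :=
  (PowerSeries.mk fun j => if Even j then (1 : ℚ) / (j / 2 + 1) else 0)⁻¹

/-- The series `−log(1−y) = ∑_{k≥1} y^k/k`. -/
noncomputable def negLogOneSub : ℚ⟦X⟧ :=
  PowerSeries.mk fun k => if k = 0 then 0 else 1 / (k : ℚ)

/-- The series `−log(2−eᵛ) − v` in `v` (note `2 − eᵛ = 1 − (eᵛ−1)`). -/
noncomputable def denomD : ℚ⟦X⟧ :=
  psComp negLogOneSub (PowerSeries.exp ℚ - 1) - X

namespace Stmt13

open Finset Polynomial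

variable {f : ℚ⟦X⟧}

lemma coeff_pow_of_lt (hf : constantCoeff f = 0) {n k : ℕ} (h : n < k) :
    coeff n (f ^ k) = 0 := by
  obtain ⟨g, hg⟩ := PowerSeries.X_dvd_iff.2 hf
  rw [hg, mul_pow, PowerSeries.coeff_X_pow_mul', if_neg (by omega)]

lemma coeff_aeval (hf : constantCoeff f = 0) (P : Polynomial ℚ) (n : ℕ) :
    coeff n (aeval f P) = ∑ k ∈ range (n + 1), P.coeff k * coeff n (f ^ k) := by
  have hdeg : P.natDegree < max (n + 1) (P.natDegree + 1) :=
    lt_of_lt_of_le (Nat.lt_succ_self _) (le_max_right _ _)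
  rw [Polynomial.aeval_eq_sum_range' hdeg, map_sum]
  rw [sum_congr rfl (fun k _ => by rw [LinearMap.map_smul, smul_eq_mul] :
    ∀ k ∈ range (max (n+1) (P.natDegree+1)),
      coeff n (P.coeff k • f ^ k) = P.coeff k * coeff n (f ^ k))]
  symm
  apply Finset.sum_subset (range_subset_range.2 (le_max_left _ _))
  intro k _ hk
  rw [coeff_pow_of_lt hf (by simpa using hk), mul_zero]

lemma coeff_aeval_congr (hf : constantCoeff f = 0) {P Q : ℚ[X]} {n : ℕ}
    (h : ∀ k ≤ n, P.coeff k = Q.coeff k) :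
    coeff n (aeval f P) = coeff n (aeval f Q) := by
  rw [coeff_aeval hf, coeff_aeval hf]
  exact sum_congr rfl fun k hk => by rw [h k (by have := mem_range.1 hk; omega)]

lemma coeff_psComp (hf : constantCoeff f = 0) (g : ℚ⟦X⟧) {n N : ℕ} (hN : n < N) :
    coeff n (psComp g f) = coeff n (aeval f (trunc N g)) := by
  rw [coeff_aeval hf, psComp, coeff_mk]
  refine sum_congr rfl fun k hk => ?_
  rw [PowerSeries.coeff_trunc, if_pos (by have := mem_range.1 hk; omega)]

lemma psComp_mul (hf : constantCoeff f = 0) (g h : ℚ⟦X⟧) :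
    psComp (g * h) f = psComp g f * psComp h f := by
  ext n
  rw [PowerSeries.coeff_mul, coeff_psComp hf _ n.lt_succ_self]
  rw [sum_congr rfl (fun p hp => by
    rw [coeff_psComp hf g (show p.1 < n+1 by
          have := Finset.HasAntidiagonal.antidiagonal.fst_le hp; omega),
        coeff_psComp hf h (show p.2 < n+1 by
          have := Finset.HasAntidiagonal.antidiagonal.snd_le hp; omega)] :
    ∀ p ∈ antidiagonal n, coeff p.1 (psComp g f) * coeff p.2 (psComp h f)
      = coeff p.1 (aeval f (trunc (n+1) g)) * coeff p.2 (aeval f (trunc (n+1) h)))]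
  rw [← PowerSeries.coeff_mul, ← map_mul]
  apply coeff_aeval_congr hf
  intro k hk
  rw [PowerSeries.coeff_trunc, if_pos (by omega), ← Polynomial.coeff_coe, Polynomial.coe_mul,
    ← PowerSeries.coeff_mul_eq_coeff_trunc_mul_trunc g h (show k < n+1 by omega)]


lemma psComp_add (g h : ℚ⟦X⟧) : psComp (g + h) f = psComp g f + psComp h f := by
  ext n
  simp [psComp, add_mul, Finset.sum_add_distrib]

lemma psComp_sub (g h : ℚ⟦X⟧) : psComp (g - h) f = psComp g f - psComp h f := by
  ext n
  simp [psComp, sub_mul, Finset.sum_sub_distrib]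

lemma psComp_one : psComp 1 f = 1 := by
  ext n
  simp [psComp, PowerSeries.coeff_one, ite_mul]

lemma psComp_X (hf : constantCoeff f = 0) : psComp X f = f := by
  ext n
  rw [psComp, coeff_mk]
  simp only [PowerSeries.coeff_X, ite_mul, one_mul, zero_mul, Finset.sum_ite_eq' (range (n+1)) 1]
  cases n with
  | zero => simpa using hf.symm
  | succ n => simp

lemma psComp_pow (hf : constantCoeff f = 0) (g : ℚ⟦X⟧) (k : ℕ) :
    psComp (g ^ k) f = psComp g f ^ k := by
  induction k with
  | zero => simpa using psComp_one
  | succ k ih => rw [pow_succ, pow_succ, psComp_mul hf, ih]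

lemma constantCoeff_psComp (g : ℚ⟦X⟧) :
    constantCoeff (psComp g f) = constantCoeff g := by
  rw [← coeff_zero_eq_constantCoeff, psComp, coeff_mk]
  simp

lemma derivative_aeval (P : ℚ[X]) (f : ℚ⟦X⟧) :
    d⁄dX ℚ (aeval f P) = aeval f (Polynomial.derivative P) * d⁄dX ℚ f := by
  induction P using Polynomial.induction_on' with
  | add p q hp hq => simp [hp, hq, add_mul]
  | monomial n a =>
    rw [Polynomial.aeval_monomial, Polynomial.derivative_monomial, Polynomial.aeval_monomial,
      Derivation.leibniz, Derivation.leibniz_pow, Derivation.map_algebraMap,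
      smul_zero, add_zero, smul_eq_mul, nsmul_eq_mul, smul_eq_mul, map_mul, map_natCast]
    ring

lemma psComp_derivative (hf : constantCoeff f = 0) (g : ℚ⟦X⟧) :
    d⁄dX ℚ (psComp g f) = psComp (d⁄dX ℚ g) f * d⁄dX ℚ f := by
  ext n
  rw [PowerSeries.coeff_derivative, coeff_psComp hf g (n+1).lt_succ_self, ← PowerSeries.coeff_derivative,
    derivative_aeval, PowerSeries.coeff_mul, PowerSeries.coeff_mul]
  refine Finset.sum_congr rfl fun p hp => ?_
  congr 1
  rw [coeff_psComp hf _ p.1.lt_succ_self]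
  apply coeff_aeval_congr hf
  intro k hk
  have hp1 : p.1 ≤ n := Finset.HasAntidiagonal.antidiagonal.fst_le hp
  rw [Polynomial.coeff_derivative, PowerSeries.coeff_trunc, PowerSeries.coeff_trunc,
    if_pos (by omega), if_pos (by omega), PowerSeries.coeff_derivative]


noncomputable def uu : ℚ⟦X⟧ := PowerSeries.mk fun n => 1 / (n + 1).factorial

lemma constantCoeff_uu : constantCoeff uu = 1 := by
  rw [← coeff_zero_eq_constantCoeff]; simp [uu]

noncomputable def ff : ℚ⟦X⟧ := PowerSeries.exp ℚ - 1

lemma constantCoeff_ff : constantCoeff ff = 0 := by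
  simp [ff, PowerSeries.constantCoeff_exp]

lemma ff_eq : ff = PowerSeries.X * uu := by
  ext n
  cases n with
  | zero =>
    rw [PowerSeries.coeff_zero_X_mul, coeff_zero_eq_constantCoeff, constantCoeff_ff]
  | succ n =>
    rw [PowerSeries.coeff_succ_X_mul, ff, map_sub, PowerSeries.coeff_exp, PowerSeries.coeff_one,
      if_neg n.succ_ne_zero, sub_zero, uu, coeff_mk]
    simp

lemma derivative_ff : d⁄dX ℚ ff = PowerSeries.exp ℚ := by
  ext n
  rw [PowerSeries.coeff_derivative, ff, map_sub, PowerSeries.coeff_exp, PowerSeries.coeff_one,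
    if_neg n.succ_ne_zero, sub_zero, PowerSeries.coeff_exp]
  have h1 : ((n+1).factorial : ℚ) = (n+1) * n.factorial := by
    rw [Nat.factorial_succ]; push_cast; ring
  have h2 : (n.factorial : ℚ) ≠ 0 := Nat.cast_ne_zero.2 n.factorial_ne_zero
  simp only [eq_ratCast, Rat.cast_div]
  rw [h1]
  field_simp
  simp

lemma derivative_exp' : d⁄dX ℚ (PowerSeries.exp ℚ) = PowerSeries.exp ℚ := by
  ext n
  rw [PowerSeries.coeff_derivative, PowerSeries.coeff_exp, PowerSeries.coeff_exp]
  have h1 : ((n+1).factorial : ℚ) = (n+1) * n.factorial := by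
    rw [Nat.factorial_succ]; push_cast; ring
  have h2 : (n.factorial : ℚ) ≠ 0 := Nat.cast_ne_zero.2 n.factorial_ne_zero
  simp only [eq_ratCast, Rat.cast_div]
  rw [h1]
  field_simp
  simp


noncomputable def L3 : ℚ⟦X⟧ := PowerSeries.mk fun k => if k = 0 then 0 else (-1)^(k+1)/k
noncomputable def G3 : ℚ⟦X⟧ := PowerSeries.mk fun n => (-1 : ℚ)^n

lemma derivative_L3 : d⁄dX ℚ L3 = G3 := by
  ext n
  rw [PowerSeries.coeff_derivative, L3, G3, coeff_mk, coeff_mk, if_neg n.succ_ne_zero]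
  have h : ((-1:ℚ))^(n+1+1) = (-1)^n := by rw [pow_succ, pow_succ]; ring
  rw [h]
  have h2 : ((n:ℚ)+1) ≠ 0 := by positivity
  push_cast
  field_simp

lemma G3_mul : (1 + PowerSeries.X) * G3 = 1 := by
  ext n
  rw [add_mul, one_mul, map_add]
  cases n with
  | zero => simp [G3]
  | succ n =>
    rw [PowerSeries.coeff_succ_X_mul, G3, coeff_mk, coeff_mk, PowerSeries.coeff_one,
      if_neg n.succ_ne_zero, pow_succ]
    ring

lemma ff_def : ff = PowerSeries.exp ℚ - 1 := rfl

lemma psComp_L3 : psComp L3 ff = PowerSeries.X := by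
  apply PowerSeries.derivative.ext
  · rw [psComp_derivative constantCoeff_ff, derivative_L3, derivative_ff,
      PowerSeries.derivative_X]
    have he : (1 : ℚ⟦X⟧) + ff = PowerSeries.exp ℚ := by rw [ff_def]; ring
    have h1 : psComp ((1 + PowerSeries.X) * G3) ff = psComp 1 ff := by rw [G3_mul]
    rw [psComp_mul constantCoeff_ff, psComp_add, psComp_one, psComp_X constantCoeff_ff,
      he] at h1
    rw [mul_comm]
    exact h1
  · rw [constantCoeff_psComp, ← coeff_zero_eq_constantCoeff]
    simp [L3]

noncomputable def L2 : ℚ⟦X⟧ := negLogOneSub - L3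

lemma denomD_eq : denomD = psComp L2 ff := by
  rw [denomD, L2, psComp_sub, psComp_L3, ← ff_def]

noncomputable def MM : ℚ⟦X⟧ := PowerSeries.mk fun j => if Even j then (1:ℚ)/(j/2+1) else 0

lemma X2_mul_MM : PowerSeries.X^2 * MM = L2 := by
  ext n
  rw [PowerSeries.coeff_X_pow_mul', L2, map_sub, negLogOneSub, L3, coeff_mk, coeff_mk, MM]
  by_cases h2 : 2 ≤ n
  · rw [if_pos h2, coeff_mk]
    rcases Nat.even_or_odd n with he | ho
    · obtain ⟨t, ht⟩ := he
      have hev : Even (n - 2) := ⟨t - 1, by omega⟩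
      rw [if_pos hev, if_neg (by omega : ¬ n = 0), if_neg (by omega : ¬ n = 0)]
      have hodd : Odd (n + 1) := ⟨t, by omega⟩
      rw [hodd.neg_one_pow]
      have ht0 : (t : ℚ) ≠ 0 := Nat.cast_ne_zero.2 (by omega)
      have hnq : (n : ℚ) = 2 * t := by push_cast [ht]; ring
      rw [Nat.cast_sub h2, hnq]
      have ht1 : (t : ℚ) - 1 + 1 = t := by ring
      field_simp
      ring
    · have hne : ¬ Even (n - 2) := by
        rcases ho with ⟨t, ht⟩
        rintro ⟨s, hs⟩
        omega
      rw [if_neg hne, if_neg (by omega : ¬ n = 0), if_neg (by omega : ¬ n = 0)]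
      have hev : Even (n + 1) := by
        rcases ho with ⟨t, ht⟩; exact ⟨t + 1, by omega⟩
      rw [hev.neg_one_pow]
      ring
  · rw [if_neg h2]
    interval_cases n
    · simp
    · norm_num

lemma constantCoeff_MM : constantCoeff MM = 1 := by
  rw [← coeff_zero_eq_constantCoeff, MM, coeff_mk]
  norm_num

lemma ratioQ_mul_L2 : ratioQ * L2 = PowerSeries.X ^ 2 := by
  have h : ratioQ = MM⁻¹ := rfl
  rw [h, ← X2_mul_MM, mul_comm MM⁻¹, mul_assoc,
    PowerSeries.mul_inv_cancel _ (by rw [constantCoeff_MM]; norm_num), mul_one]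


noncomputable def vv : ℚ⟦X⟧ := uu⁻¹

lemma uu_mul_vv : uu * vv = 1 :=
  PowerSeries.mul_inv_cancel _ (by rw [constantCoeff_uu]; norm_num)

lemma constantCoeff_vv : constantCoeff vv = 1 := by
  have h := congrArg (PowerSeries.constantCoeff) uu_mul_vv
  rw [map_mul, constantCoeff_uu, one_mul, map_one] at h
  exact h

lemma exp_eq : PowerSeries.exp ℚ = uu + PowerSeries.X * d⁄dX ℚ uu := by
  have h := congrArg (d⁄dX ℚ) ff_eq
  rw [derivative_ff, Derivation.leibniz, PowerSeries.derivative_X, smul_eq_mul, smul_eq_mul,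
    mul_one] at h
  rw [h]; ring

lemma coeff_exp_vv (r : ℕ) :
    coeff r (PowerSeries.exp ℚ * vv ^ (r + 1)) = if r = 0 then 1 else 0 := by
  cases r with
  | zero =>
    rw [if_pos rfl, pow_one, coeff_zero_eq_constantCoeff, map_mul,
      PowerSeries.constantCoeff_exp, constantCoeff_vv, one_mul]
  | succ s =>
    rw [if_neg s.succ_ne_zero]
    have h1 : uu ^ (s+1) * vv ^ (s+1) = 1 := by rw [← mul_pow, uu_mul_vv, one_pow]
    have h2 : uu ^ s * vv ^ s = 1 := by rw [← mul_pow, uu_mul_vv, one_pow]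
    have hD := congrArg (d⁄dX ℚ) h1
    rw [Derivation.leibniz, Derivation.leibniz_pow (d⁄dX ℚ) uu, Derivation.map_one_eq_zero] at hD
    simp only [smul_eq_mul, nsmul_eq_mul, Nat.add_sub_cancel] at hD
    have key : PowerSeries.C ((s:ℚ)+1) * (d⁄dX ℚ uu * vv ^ (s+2)) = - d⁄dX ℚ (vv ^ (s+1)) := by
      have hC : (PowerSeries.C) ((s:ℚ)+1) = ((s+1 : ℕ) : ℚ⟦X⟧) := by
        rw [map_add, map_natCast, map_one]
        push_cast
        ring
      rw [hC]
      linear_combination (vv ^ (s+1)) * hD - (d⁄dX ℚ (vv ^ (s+1))) * h1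
        - ((s+1 : ℕ) : ℚ⟦X⟧) * (d⁄dX ℚ uu) * vv ^ (s+2) * h2
    have hcoeff := congrArg (PowerSeries.coeff s) key
    rw [PowerSeries.coeff_C_mul, map_neg, PowerSeries.coeff_derivative] at hcoeff
    have hs1 : ((s:ℚ)+1) ≠ 0 := by positivity
    -- now the coefficient computation
    have hsplit : PowerSeries.exp ℚ * vv ^ (s+1+1) = vv ^ (s+1)
        + PowerSeries.X * (d⁄dX ℚ uu * vv ^ (s+2)) := by
      rw [exp_eq]
      linear_combination (vv ^ (s+1)) * uu_mul_vv
    rw [hsplit, map_add, PowerSeries.coeff_succ_X_mul]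
    have hval : coeff s (d⁄dX ℚ uu * vv ^ (s+2)) = - coeff (s+1) (vv ^ (s+1)) := by
      apply mul_left_cancel₀ hs1
      linear_combination (norm := (push_cast; ring1)) hcoeff
    rw [hval]
    ring

end Stmt13

open Stmt13 Finset

/-- `h_m = [y^m] (y²/(−log(1−y²)))^((m+1)/2)` equals
`[v^m] eᵛ·(v²/(−log(2−eᵛ)−v))^((m+1)/2)`, the powers being the ones with
constant term 1.  Here `Q2 = v²/(−log(2−eᵛ)−v)` is characterized by
`Q2·(−log(2−eᵛ)−v) = v²`. -/
theorem stmt13 (m : ℕ) (Q2 H1 H2 : ℚ⟦X⟧)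
    (hQ2 : Q2 * denomD = X ^ 2)
    (hH1 : H1 ^ 2 = ratioQ ^ (m + 1)) (hH10 : constantCoeff H1 = 1)
    (hH2 : H2 ^ 2 = Q2 ^ (m + 1)) (hH20 : constantCoeff H2 = 1) :
    coeff m H1 = coeff m (PowerSeries.exp ℚ * H2) := by
  have hf0 := constantCoeff_ff
  have hDne : denomD ≠ 0 := by
    intro h
    have h2 := congrArg (coeff 2) hQ2
    rw [h, mul_zero] at h2
    simp [PowerSeries.coeff_X_pow] at h2
  have hratio : psComp ratioQ ff * denomD = PowerSeries.X ^ 2 * uu ^ 2 := by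
    have h := congrArg (fun g => psComp g ff) ratioQ_mul_L2
    rw [psComp_mul hf0, psComp_pow hf0, psComp_X hf0, ← denomD_eq] at h
    rw [h, ff_eq]; ring
  have hcr : psComp ratioQ ff = uu ^ 2 * Q2 := by
    apply mul_right_cancel₀ hDne
    rw [hratio, mul_assoc, hQ2]; ring
  have hHsq : psComp H1 ff ^ 2 = (uu ^ (m+1) * H2) ^ 2 := by
    rw [← psComp_pow hf0, hH1, psComp_pow hf0, hcr, mul_pow, mul_pow, hH2]
    ring
  have hHeq : psComp H1 ff = uu ^ (m+1) * H2 := by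
    have hd : (psComp H1 ff - uu^(m+1) * H2) * (psComp H1 ff + uu^(m+1) * H2) = 0 := by
      linear_combination hHsq
    rcases mul_eq_zero.1 hd with h | h
    · exact sub_eq_zero.1 h
    · exfalso
      have hc := congrArg (constantCoeff) h
      rw [map_add, map_mul, map_pow, constantCoeff_uu, constantCoeff_psComp, hH10, hH20,
        one_pow, one_mul, map_zero] at hc
      norm_num at hc
  have hH2eq : H2 = vv ^ (m+1) * psComp H1 ff := by
    rw [hHeq, ← mul_assoc, ← mul_pow, mul_comm vv uu, uu_mul_vv, one_pow, one_mul]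
  have hR : ∀ k ≤ m, coeff m (PowerSeries.exp ℚ * vv ^ (m+1) * ff ^ k)
      = if k = m then 1 else 0 := by
    intro k hk
    have h1 : vv ^ k * uu ^ k = 1 := by rw [← mul_pow, mul_comm, uu_mul_vv, one_pow]
    have hv : vv ^ (m+1) = vv ^ (m+1-k) * vv ^ k := by
      rw [← pow_add]; congr 1; omega
    have hTf : PowerSeries.exp ℚ * vv ^ (m+1) * ff ^ k
        = PowerSeries.X ^ k * (PowerSeries.exp ℚ * vv ^ (m+1-k)) := by
      rw [ff_eq, mul_pow, hv]
      linear_combination (PowerSeries.exp ℚ * vv ^ (m+1-k) * PowerSeries.X ^ k) * h1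
    rw [hTf, PowerSeries.coeff_X_pow_mul', if_pos hk]
    have hmk : m + 1 - k = (m - k) + 1 := by omega
    rw [hmk, coeff_exp_vv (m - k)]
    by_cases hkm : k = m
    · rw [if_pos (by omega), if_pos hkm]
    · rw [if_neg (by omega), if_neg hkm]
  have hcomp_expand : ∀ b ≤ m, coeff b (psComp H1 ff)
      = ∑ k ∈ range (m+1), coeff k H1 * coeff b (ff ^ k) := by
    intro b hb
    rw [psComp, coeff_mk]
    apply Finset.sum_subset (Finset.range_subset_range.2 (by omega))
    intro k hk hk'
    rw [coeff_pow_of_lt hf0 (by simp at hk hk' ⊢; omega), mul_zero]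
  rw [hH2eq, ← mul_assoc, PowerSeries.coeff_mul]
  rw [Finset.sum_congr rfl (fun p hp => by
    rw [hcomp_expand p.2 (Finset.HasAntidiagonal.antidiagonal.snd_le hp), Finset.mul_sum])]
  rw [Finset.sum_comm]
  have inner : ∀ k ∈ range (m+1),
      (∑ p ∈ antidiagonal m, coeff p.1 (PowerSeries.exp ℚ * vv ^ (m+1)) *
        (coeff k H1 * coeff p.2 (ff ^ k)))
      = coeff k H1 * (if k = m then 1 else 0) := by
    intro k hk
    rw [Finset.sum_congr rfl (fun p _ => by
      ring : ∀ p ∈ antidiagonal m,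
        coeff p.1 (PowerSeries.exp ℚ * vv ^ (m+1)) * (coeff k H1 * coeff p.2 (ff ^ k))
        = coeff k H1 * (coeff p.1 (PowerSeries.exp ℚ * vv ^ (m+1)) * coeff p.2 (ff ^ k)))]
    rw [← Finset.mul_sum, ← PowerSeries.coeff_mul, hR k (by simp at hk; omega)]
  rw [Finset.sum_congr rfl inner]
  simp
end

section
/- Define b_m = [t^m] ((1 − e^{−t})/t)^{1/2} (square-root branch with constant term 1) and h_m = [y^m] (y²/(−log(1−y²)))^{(m+1)/2} (constant term 1). Then h_{2m} = (2m+1)·b_m for every m ≥ 0. -/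
open PowerSeries Finset
open scoped Polynomial

/-- `(1−e^{−t})/t = ∑_{k≥0} (−1)^k t^k/(k+1)!`, with constant term 1. -/
noncomputable def ratioB : ℚ⟦X⟧ :=
  PowerSeries.mk fun k => (-1) ^ k / ((k + 1).factorial : ℚ)

namespace Stmt15

noncomputable def Pu : ℚ⟦X⟧ := PowerSeries.mk fun k => (1:ℚ)/(k+1)
noncomputable def Qu : ℚ⟦X⟧ := Pu⁻¹
noncomputable def Eb : ℚ⟦X⟧ := X * ratioB
noncomputable def Lp : ℚ⟦X⟧ := PowerSeries.mk fun _ => (1:ℚ)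

lemma constPu : constantCoeff Pu = 1 := by
  simp [Pu, constantCoeff_mk]

lemma hPQ : Pu * Qu = 1 := PowerSeries.mul_inv_cancel _ (by rw [constPu]; norm_num)

lemma hQP : Qu * Pu = 1 := by rw [mul_comm]; exact hPQ

lemma constQu : constantCoeff Qu = 1 := by
  have := hPQ
  have h2 := congrArg (constantCoeff) this
  simp [constPu] at h2
  simpa using h2

lemma dL : d⁄dX ℚ (X * Pu) = Lp := by
  ext n
  rw [coeff_derivative, coeff_succ_X_mul]
  simp only [Pu, Lp, coeff_mk]
  field_simp

lemma LpUnit : (1 - X) * Lp = 1 := by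
  ext n
  rw [sub_mul, one_mul, map_sub, coeff_one]
  cases n with
  | zero => simp [Lp, constantCoeff_mk, coeff_zero_eq_constantCoeff]
  | succ k => simp [Lp, coeff_succ_X_mul, coeff_mk]

/-- the key identity (‡) -/
lemma key1 : Qu = X * (d⁄dX ℚ Qu) + Qu^2 * Lp := by
  have h1 : d⁄dX ℚ (Qu * (X * Pu)) = 1 := by
    have : Qu * (X * Pu) = X := by
      calc Qu * (X * Pu) = X * (Pu * Qu) := by ring
      _ = X := by rw [hPQ, mul_one]
    rw [this, derivative_X]
  rw [Derivation.leibniz, smul_eq_mul, smul_eq_mul, dL] at h1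
  linear_combination (-Qu) * h1 + (X * (d⁄dX ℚ Qu)) * hQP

lemma dEb : d⁄dX ℚ Eb = 1 - Eb := by
  ext n
  rw [coeff_derivative]
  cases n with
  | zero =>
    simp [Eb, ratioB, coeff_succ_X_mul, coeff_mk, coeff_one, coeff_zero_eq_constantCoeff]
  | succ k =>
    rw [map_sub, coeff_one, if_neg (by omega)]
    simp only [Eb, coeff_succ_X_mul, ratioB, coeff_mk]
    have h1 : ((k+1).factorial : ℚ) ≠ 0 := Nat.cast_ne_zero.mpr (k+1).factorial_ne_zero
    have h2 : ((k+2).factorial : ℚ) = (k+2) * ((k+1).factorial : ℚ) := by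
      rw [Nat.factorial_succ]; push_cast; ring
    rw [h2]
    have h3 : ((k:ℚ)+2) ≠ 0 := by positivity
    field_simp
    push_cast
    ring

lemma aE_rec (m n : ℕ) : ((m:ℚ)+1) * coeff (m+1) (Eb^(n+1))
    = ((n:ℚ)+1) * (coeff m (Eb^n) - coeff m (Eb^(n+1))) := by
  have h : d⁄dX ℚ (Eb^(n+1)) = (n+1) • (Eb ^ n * (1 - Eb)) := by
    have := Derivation.leibniz_pow (D := d⁄dX ℚ) Eb (n+1)
    simpa [dEb, smul_eq_mul] using this
  have h2 := congrArg (coeff m) h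
  rw [coeff_derivative, map_nsmul, show Eb ^ n * (1 - Eb) = Eb ^ n - Eb ^ (n+1) by ring,
    map_sub, nsmul_eq_mul] at h2
  push_cast at h2
  linarith [h2]

lemma dQupow (m : ℕ) : d⁄dX ℚ (Qu^(m+1)) = (m+1) • (Qu ^ m * d⁄dX ℚ Qu) := by
  have := Derivation.leibniz_pow (D := d⁄dX ℚ) Qu (m+1)
  simpa [smul_eq_mul] using this

lemma rz (m : ℕ) : coeff (m+1) (Qu^(m+2) * Lp) = 0 := by
  have hs : (m+1 : ℕ) • Qu^(m+1) = X * d⁄dX ℚ (Qu^(m+1)) + (m+1 : ℕ) • (Qu^(m+2) * Lp) := by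
    rw [dQupow m, nsmul_eq_mul, nsmul_eq_mul, nsmul_eq_mul]
    linear_combination (norm := (push_cast; ring1)) ((m+1 : ℕ) : ℚ⟦X⟧) * Qu^m * key1
  have h2 := congrArg (coeff (m+1)) hs
  rw [map_nsmul, map_add, map_nsmul, coeff_succ_X_mul, coeff_derivative, nsmul_eq_mul,
    nsmul_eq_mul] at h2
  push_cast at h2
  have hm : ((m:ℚ)+1) ≠ 0 := by positivity
  have h5 : ((m:ℚ)+1) * coeff (m+1) (Qu^(m+2) * Lp) = 0 := by linarith
  exact (mul_eq_zero.mp h5).resolve_left hm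

lemma rrec (m n : ℕ) : ((m:ℚ)+1) * coeff (m+1) (X^(n+1) * Qu^(m+2) * Lp)
    = ((n:ℚ)+1) * (coeff m (X^n * Qu^(m+1) * Lp) - coeff m (X^(n+1) * Qu^(m+1) * Lp)) := by
  -- step 1 : A-identity
  have hA : X^(n+1) * Qu^(m+2) * Lp = X^(n+1) * Qu^(m+1) - X * (X^(n+1) * Qu^m * d⁄dX ℚ Qu) := by
    linear_combination (-(X^(n+1)) * Qu^m) * key1
  -- step 2 : derivative of X^(n+1) * Qu^(m+1)
  have hB : d⁄dX ℚ (X^(n+1) * Qu^(m+1))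
      = (n+1 : ℕ) • (X^n * Qu^(m+1)) + (m+1 : ℕ) • (X * (X^n * Qu^m * d⁄dX ℚ Qu)) := by
    rw [Derivation.leibniz, dQupow m]
    have hX : d⁄dX ℚ (X^(n+1) : ℚ⟦X⟧) = (n+1 : ℕ) • (X^n : ℚ⟦X⟧) := by
      have := Derivation.leibniz_pow (D := d⁄dX ℚ) (X : ℚ⟦X⟧) (n+1)
      simpa [smul_eq_mul] using this
    rw [hX, smul_eq_mul, smul_eq_mul, nsmul_eq_mul, nsmul_eq_mul, nsmul_eq_mul, nsmul_eq_mul]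
    ring
  -- step 3 : C-identity
  have hC : X^n * Qu^(m+1) = X^n * Qu^(m+1) * Lp - X * (X^n * Qu^(m+1) * Lp) := by
    linear_combination (-(X^n) * Qu^(m+1)) * LpUnit
  have h2 := congrArg (coeff (m+1)) hA
  have h3 := congrArg (coeff m) hB
  have h4 := congrArg (coeff m) hC
  rw [map_sub, coeff_succ_X_mul] at h2
  rw [coeff_derivative, map_add, map_nsmul, map_nsmul, nsmul_eq_mul, nsmul_eq_mul] at h3
  rw [map_sub] at h4
  push_cast at h2 h3 h4
  have e1 : coeff (m+1) (X * (X^n * Qu^(m+1) * Lp)) = coeff m (X^n * Qu^(m+1) * Lp) :=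
    coeff_succ_X_mul m _
  have e2 : coeff (m+1) (X * (X^n * Qu^m * d⁄dX ℚ Qu)) = coeff m (X^n * Qu^m * d⁄dX ℚ Qu) :=
    coeff_succ_X_mul m _
  have e3 : coeff m (X * (X^n * Qu^m * d⁄dX ℚ Qu)) = coeff m (X^(n+1) * Qu^m * d⁄dX ℚ Qu) := by
    congr 1; ring
  -- combine
  have h4' : coeff m (X^n * Qu^(m+1)) =
      coeff m (X^n * Qu^(m+1) * Lp) - coeff m (X^(n+1) * Qu^(m+1) * Lp) := by
    rw [h4]
    have : coeff m (X * (X^n * Qu^(m+1) * Lp)) = coeff m (X^(n+1) * Qu^(m+1) * Lp) := by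
      congr 1; ring
    rw [this]
  nlinarith [h2, h3, h4', e3]

lemma constEb : constantCoeff Eb = 0 := by
  simp [Eb]

lemma ar : ∀ m n, coeff m (Eb^n) = coeff m (X^n * Qu^(m+1) * Lp) := by
  intro m
  induction m with
  | zero =>
    intro n
    rw [coeff_zero_eq_constantCoeff_apply, coeff_zero_eq_constantCoeff_apply]
    cases n with
    | zero => simp [constQu, Lp, constantCoeff_mk]
    | succ k => simp [constEb, constantCoeff_X]
  | succ m ih =>
    intro n
    cases n with
    | zero =>
      simpa using (rz m).symm
    | succ k =>
      have hm : ((m:ℚ)+1) ≠ 0 := by positivity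
      have h1 := aE_rec m k
      have h2 := rrec m k
      rw [ih k, ih (k+1)] at h1
      have h3 : ((m:ℚ)+1) * coeff (m+1) (Eb ^ (k+1))
          = ((m:ℚ)+1) * coeff (m+1) (X^(k+1) * Qu^(m+2) * Lp) := by rw [h1, h2]
      simpa using mul_left_cancel₀ hm h3

noncomputable def comp (F : ℚ⟦X⟧) : ℚ⟦X⟧ :=
  PowerSeries.mk fun m => ∑ n ∈ range (m+1), PowerSeries.coeff n F * PowerSeries.coeff m (Eb^n)

lemma comp_coeff (F : ℚ⟦X⟧) (m : ℕ) : PowerSeries.coeff m (comp F)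
    = ∑ n ∈ range (m+1), PowerSeries.coeff n F * PowerSeries.coeff m (Eb^n) :=
  PowerSeries.coeff_mk _ _

lemma coeff_Eb_pow_zero {n m : ℕ} (h : m < n) : PowerSeries.coeff m (Eb^n) = 0 := by
  rw [show Eb^n = PowerSeries.X^n * ratioB^n by rw [Eb, mul_pow],
    PowerSeries.coeff_X_pow_mul', if_neg (by omega)]

lemma coeff_eval_trunc (F : ℚ⟦X⟧) {m N : ℕ} (h : m < N) :
    PowerSeries.coeff m (comp F)
      = PowerSeries.coeff m ((trunc N F).eval₂ (PowerSeries.C) Eb) := by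
  rw [eval₂_trunc_eq_sum_range, map_sum, comp_coeff]
  simp only [PowerSeries.coeff_C_mul]
  apply Finset.sum_subset (by intro x hx; simp only [mem_range] at *; omega)
  intro x hx hnx
  simp only [mem_range] at hx hnx
  rw [coeff_Eb_pow_zero (by omega), mul_zero]

lemma coeff_eval_congr {p q : ℚ[X]} {m N : ℕ} (h : m < N)
    (hc : ∀ d, d < N → p.coeff d = q.coeff d) :
    PowerSeries.coeff m (p.eval₂ (PowerSeries.C) Eb)
      = PowerSeries.coeff m (q.eval₂ (PowerSeries.C) Eb) := by
  have hdvd : (Polynomial.X : ℚ[X])^N ∣ (p - q) := by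
    rw [Polynomial.X_pow_dvd_iff]
    intro d hd
    simp [hc d hd]
  obtain ⟨r, hr⟩ := hdvd
  have hp : p = q + Polynomial.X^N * r := by linear_combination hr
  rw [hp, Polynomial.eval₂_add, Polynomial.eval₂_mul, Polynomial.eval₂_X_pow, map_add]
  have : PowerSeries.coeff m (Eb ^ N * r.eval₂ (PowerSeries.C) Eb) = 0 := by
    rw [show Eb^N = PowerSeries.X^N * ratioB^N by rw [Eb, mul_pow], mul_assoc,
      PowerSeries.coeff_X_pow_mul', if_neg (by omega)]
  rw [this, add_zero]

lemma comp_mul (F G : ℚ⟦X⟧) : comp (F * G) = comp F * comp G := by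
  ext m
  rw [coeff_eval_trunc (F*G) (Nat.lt_succ_self m), PowerSeries.coeff_mul,
    Finset.Nat.sum_antidiagonal_eq_sum_range_succ_mk]
  have hstep : ∀ p ∈ range (m+1),
      PowerSeries.coeff p (comp F) * PowerSeries.coeff (m-p) (comp G)
      = PowerSeries.coeff p ((trunc (m+1) F).eval₂ (PowerSeries.C) Eb)
        * PowerSeries.coeff (m-p) ((trunc (m+1) G).eval₂ (PowerSeries.C) Eb) := by
    intro p hp
    rw [mem_range] at hp
    rw [coeff_eval_trunc F (N := m+1) (by omega), coeff_eval_trunc G (N := m+1) (by omega)]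
  have hAB : PowerSeries.coeff m
        ((trunc (m+1) F).eval₂ (PowerSeries.C) Eb * (trunc (m+1) G).eval₂ (PowerSeries.C) Eb)
      = ∑ p ∈ range (m+1),
        PowerSeries.coeff p ((trunc (m+1) F).eval₂ (PowerSeries.C) Eb)
        * PowerSeries.coeff (m-p) ((trunc (m+1) G).eval₂ (PowerSeries.C) Eb) := by
    rw [PowerSeries.coeff_mul, Finset.Nat.sum_antidiagonal_eq_sum_range_succ_mk]
  rw [Finset.sum_congr rfl hstep, ← hAB, ← Polynomial.eval₂_mul]
  apply coeff_eval_congr (Nat.lt_succ_self m)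
  intro d hd
  rw [coeff_trunc, if_pos (by omega : d < m.succ),
    coeff_mul_eq_coeff_trunc_mul_trunc F G (by omega : d < m+1), ← Polynomial.coe_mul, Polynomial.coeff_coe]

lemma comp_coeff_r (F : ℚ⟦X⟧) (m : ℕ) :
    PowerSeries.coeff m (comp F) = PowerSeries.coeff m (F * (Qu^(m+1) * Lp)) := by
  rw [comp_coeff, PowerSeries.coeff_mul, Finset.Nat.sum_antidiagonal_eq_sum_range_succ_mk]
  apply Finset.sum_congr rfl
  intro n hn
  rw [mem_range] at hn
  rw [ar m n, mul_assoc, PowerSeries.coeff_X_pow_mul', if_pos (by omega)]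

lemma comp_Qu : comp Qu = ratioB := by
  ext m
  rw [comp_coeff_r]
  rw [show Qu * (Qu^(m+1) * Lp) = Qu^(m+2) * Lp by ring]
  have h2 : PowerSeries.coeff m (Qu^(m+2) * Lp)
      = PowerSeries.coeff (m+1) (PowerSeries.X^1 * Qu^(m+2) * Lp) := by
    rw [pow_one, mul_assoc, PowerSeries.coeff_succ_X_mul]
  rw [h2, ← ar (m+1) 1, pow_one, Eb, PowerSeries.coeff_succ_X_mul]

lemma comp_const (F : ℚ⟦X⟧) :
    PowerSeries.constantCoeff (comp F) = PowerSeries.constantCoeff F := by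
  rw [← PowerSeries.coeff_zero_eq_constantCoeff_apply, comp_coeff]
  rw [Finset.range_one, Finset.sum_singleton, pow_zero, PowerSeries.coeff_zero_eq_constantCoeff_apply,
    PowerSeries.coeff_zero_eq_constantCoeff_apply, map_one, mul_one]

noncomputable def expand2 (F : ℚ⟦X⟧) : ℚ⟦X⟧ :=
  PowerSeries.mk fun j => if Even j then coeff (j/2) F else 0

lemma coeff_expand2_even (F : ℚ⟦X⟧) (k : ℕ) : coeff (2*k) (expand2 F) = coeff k F := by
  have h2 : 2*k/2 = k := by omega
  rw [expand2, coeff_mk, if_pos ⟨k, two_mul k⟩, h2]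

lemma coeff_expand2_odd (F : ℚ⟦X⟧) {j : ℕ} (h : ¬ Even j) : coeff j (expand2 F) = 0 := by
  rw [expand2, coeff_mk, if_neg h]

lemma expand2_mul (F G : ℚ⟦X⟧) : expand2 (F * G) = expand2 F * expand2 G := by
  ext j
  rw [PowerSeries.coeff_mul]
  by_cases hj : Even j
  · obtain ⟨k, rfl⟩ : ∃ k, j = 2*k := by obtain ⟨r, hr⟩ := hj; exact ⟨r, by omega⟩
    rw [coeff_expand2_even, PowerSeries.coeff_mul]
    symm
    have hemb : Function.Injective (fun pr : ℕ × ℕ => (2*pr.1, 2*pr.2)) := by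
      intro a b hab
      simp only [Prod.mk.injEq] at hab
      ext <;> omega
    have h1 : ∑ p ∈ (HasAntidiagonal.antidiagonal k).map ⟨_, hemb⟩,
        coeff p.1 (expand2 F) * coeff p.2 (expand2 G)
        = ∑ p ∈ HasAntidiagonal.antidiagonal k, coeff p.1 F * coeff p.2 G := by
      rw [Finset.sum_map]
      apply Finset.sum_congr rfl
      intro x hx
      simp only [Function.Embedding.coeFn_mk]
      rw [coeff_expand2_even, coeff_expand2_even]
    rw [← h1]
    symm
    apply Finset.sum_subset
    · intro x hx
      rw [Finset.mem_map] at hx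
      obtain ⟨⟨a,b⟩, hab, rfl⟩ := hx
      rw [HasAntidiagonal.mem_antidiagonal] at hab ⊢
      simp only [Function.Embedding.coeFn_mk]
      omega
    · intro x hx hnx
      rw [HasAntidiagonal.mem_antidiagonal] at hx
      rcases Nat.even_or_odd x.1 with he1 | ho1
      · rcases Nat.even_or_odd x.2 with he2 | ho2
        · exfalso
          apply hnx
          rw [Finset.mem_map]
          obtain ⟨a, ha⟩ := he1
          obtain ⟨b, hb⟩ := he2
          refine ⟨(a, b), ?_, ?_⟩
          · rw [HasAntidiagonal.mem_antidiagonal]; omega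
          · simp only [Function.Embedding.coeFn_mk, Prod.ext_iff]
            constructor <;> omega
        · rw [coeff_expand2_odd G (Nat.not_even_iff_odd.mpr ho2), mul_zero]
      · rw [coeff_expand2_odd F (Nat.not_even_iff_odd.mpr ho1), zero_mul]
  · rw [coeff_expand2_odd _ hj]
    symm
    apply Finset.sum_eq_zero
    intro x hx
    rw [HasAntidiagonal.mem_antidiagonal] at hx
    rcases Nat.even_or_odd x.1 with he1 | ho1
    · have ho2 : ¬ Even x.2 := by
        intro he2
        exact hj (hx ▸ he1.add he2)
      rw [coeff_expand2_odd G ho2, mul_zero]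
    · rw [coeff_expand2_odd F (Nat.not_even_iff_odd.mpr ho1), zero_mul]

lemma expand2_one : expand2 (1 : ℚ⟦X⟧) = 1 := by
  ext j
  rw [coeff_one]
  by_cases hj : Even j
  · rw [expand2, coeff_mk, if_pos hj, coeff_one]
    obtain ⟨r, hr⟩ := hj
    rcases Nat.eq_zero_or_pos r with h0 | hpos
    · simp [hr, h0]
    · rw [if_neg (by omega), if_neg (by omega)]
  · rw [coeff_expand2_odd _ hj, if_neg (by rintro rfl; exact hj (Even.zero))]

lemma expand2_pow (F : ℚ⟦X⟧) (n : ℕ) : expand2 (F^n) = (expand2 F)^n := by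
  induction n with
  | zero => simpa using expand2_one
  | succ k ih => rw [pow_succ, pow_succ, expand2_mul, ih]

lemma expand2_inj {A B : ℚ⟦X⟧} (h : expand2 A = expand2 B) : A = B := by
  ext k
  have := congrArg (coeff (2*k)) h
  rwa [coeff_expand2_even, coeff_expand2_even] at this

lemma expand2_Pu : expand2 Pu
    = PowerSeries.mk fun j => if Even j then (1 : ℚ) / (j / 2 + 1) else 0 := by
  ext j
  rw [expand2, coeff_mk, coeff_mk]
  by_cases hj : Even j
  · rw [if_pos hj, if_pos hj, Pu, coeff_mk]
    obtain ⟨r, hr⟩ := hj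
    subst hr
    have h1 : (r + r) / 2 = r := by omega
    rw [h1]
    push_cast
    ring_nf
  · rw [if_neg hj, if_neg hj]

lemma ratioQ_eq : ratioQ = expand2 Qu := by
  rw [ratioQ, ← expand2_Pu]
  symm
  rw [PowerSeries.eq_inv_iff_mul_eq_one]
  · rw [← expand2_mul, hQP, expand2_one]
  · rw [← PowerSeries.coeff_zero_eq_constantCoeff_apply, expand2, coeff_mk,
      if_pos (Even.zero), Pu, coeff_mk]
    norm_num

lemma sqrt_unique {A B : ℚ⟦X⟧} (h : A^2 = B^2) (hA : constantCoeff A = 1)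
    (hB : constantCoeff B = 1) : A = B := by
  have h1 : (A - B) * (A + B) = 0 := by linear_combination h
  have h2 : A + B ≠ 0 := by
    intro hc
    have := congrArg (constantCoeff) hc
    rw [map_add, hA, hB] at this
    norm_num at this
  have h3 := (mul_eq_zero.mp h1).resolve_right h2
  linear_combination h3

lemma even_of_sq_even {F : ℚ⟦X⟧} (h0 : constantCoeff F = 1)
    (hF : ∀ j, ¬ Even j → coeff j (F^2) = 0) : ∀ j, ¬ Even j → coeff j F = 0 := by
  intro j
  induction j using Nat.strong_induction_on with
  | _ j ih =>
    intro hj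
    have hj0 : j ≠ 0 := by rintro rfl; exact hj Even.zero
    have h2 := hF j hj
    rw [sq, coeff_mul] at h2
    have hsmall : ({(0, j), (j, 0)} : Finset (ℕ × ℕ)) ⊆ HasAntidiagonal.antidiagonal j := by
      intro x hx
      simp only [Finset.mem_insert, Finset.mem_singleton] at hx
      rcases hx with rfl | rfl <;> simp [HasAntidiagonal.mem_antidiagonal]
    have hz : ∀ x ∈ HasAntidiagonal.antidiagonal j, x ∉ ({(0, j), (j, 0)} : Finset (ℕ × ℕ)) →
        coeff x.1 F * coeff x.2 F = 0 := by
      intro x hx hnx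
      rw [HasAntidiagonal.mem_antidiagonal] at hx
      simp only [Finset.mem_insert, Finset.mem_singleton, Prod.ext_iff] at hnx
      push_neg at hnx
      obtain ⟨hn1, hn2⟩ := hnx
      have hx1 : x.1 ≠ 0 := by
        intro hc; exact (hn1 hc) (by omega)
      have hx2 : x.2 ≠ 0 := by
        intro hc; exact (hn2 (by omega)) hc
      rcases Nat.even_or_odd x.1 with he1 | ho1
      · have ho2 : ¬ Even x.2 := fun hq => hj (hx ▸ he1.add hq)
        rw [ih x.2 (by omega) ho2, mul_zero]
      · rw [ih x.1 (by omega) (Nat.not_even_iff_odd.mpr ho1), zero_mul]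
    rw [← Finset.sum_subset hsmall hz] at h2
    rw [Finset.sum_insert (by simp [Prod.ext_iff]; omega), Finset.sum_singleton] at h2
    rw [← coeff_zero_eq_constantCoeff_apply] at h0
    rw [h0] at h2
    linarith [h2]
lemma hQP2 : ratioQ * expand2 Pu = 1 := by
  rw [ratioQ_eq, ← expand2_mul, hQP, expand2_one]

lemma dL2 : d⁄dX ℚ (X^2 * expand2 Pu) = C 2 * (X * expand2 Lp) := by
  ext n
  rw [coeff_derivative, coeff_C_mul]
  cases n with
  | zero =>
    rw [PowerSeries.coeff_X_pow_mul', if_neg (by omega)]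
    simp
  | succ k =>
    rw [PowerSeries.coeff_X_pow_mul', if_pos (by omega), coeff_succ_X_mul,
      show k + 1 + 1 - 2 = k by omega]
    rw [expand2, expand2, coeff_mk, coeff_mk]
    by_cases hk : Even k
    · rw [if_pos hk, if_pos hk, Pu, coeff_mk, Lp, coeff_mk]
      obtain ⟨a, ha⟩ := hk
      subst ha
      rw [show (a+a)/2 = a by omega]
      push_cast
      field_simp
      ring
    · rw [if_neg hk, if_neg hk]
      simp

lemma key2 : X^2 * d⁄dX ℚ ratioQ + C 2 * (X * (ratioQ^2 * expand2 Lp))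
    = C 2 * (X * ratioQ) := by
  have hmain : d⁄dX ℚ (ratioQ * (X^2 * expand2 Pu)) = C 2 * X := by
    rw [show ratioQ * (X^2 * expand2 Pu) = X^2 * (ratioQ * expand2 Pu) by ring, hQP2, mul_one]
    have := Derivation.leibniz_pow (D := d⁄dX ℚ) (X : ℚ⟦X⟧) 2
    rw [this, derivative_X, smul_eq_mul, mul_one, nsmul_eq_mul, pow_one]
    norm_num
    rw [show ((2:ℚ⟦X⟧)) = C 2 from (map_ofNat C 2).symm]
  rw [Derivation.leibniz, dL2, smul_eq_mul, smul_eq_mul] at hmain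
  linear_combination ratioQ * hmain - (X^2 * d⁄dX ℚ ratioQ) * hQP2

section
variable (m : ℕ) (H : ℚ⟦X⟧) (hH : H ^ 2 = ratioQ ^ (2 * m + 1))

include hH in
lemma hHP : C (2*(m:ℚ)+1) * (H * expand2 Pu * d⁄dX ℚ ratioQ) = C 2 * d⁄dX ℚ H := by
  have hd : C 2 * (H * d⁄dX ℚ H) = C (2*(m:ℚ)+1) * (ratioQ^(2*m) * d⁄dX ℚ ratioQ) := by
    have h1 := congrArg (d⁄dX ℚ) hH
    rw [Derivation.leibniz_pow, Derivation.leibniz_pow] at h1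
    rw [smul_eq_mul, smul_eq_mul, nsmul_eq_mul, nsmul_eq_mul] at h1
    rw [show (2:ℕ) - 1 = 1 by rfl, show 2*m + 1 - 1 = 2*m by omega, pow_one] at h1
    push_cast at h1
    rw [show ((2:ℚ⟦X⟧)) = C 2 from (map_ofNat C 2).symm] at h1
    rw [map_add, map_mul, map_one, map_natCast]
    exact h1
  have hone : H^2 * (expand2 Pu)^(2*m+1) = 1 := by
    rw [hH, ← mul_pow, hQP2, one_pow]
  have htwo : ratioQ^(2*m) * (expand2 Pu)^(2*m) = 1 := by
    rw [← mul_pow, hQP2, one_pow]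
  linear_combination (-(H * (expand2 Pu)^(2*m+1))) * hd + (C 2 * d⁄dX ℚ H) * hone
    - (C (2*(m:ℚ)+1) * H * expand2 Pu * d⁄dX ℚ ratioQ) * htwo

include hH in
lemma yside : (2*(m:ℚ)+1) * coeff (2*m) (H * (ratioQ * expand2 Lp)) = coeff (2*m) H := by
  have hser : C 2 * (X^2 * d⁄dX ℚ H)
      + C (2*(m:ℚ)+1) * (C 2 * (X * (H * (ratioQ * expand2 Lp))))
      = C (2*(m:ℚ)+1) * (C 2 * (X * H)) := by
    linear_combination (C (2*(m:ℚ)+1) * H * expand2 Pu) * key2 - X^2 * (hHP m H hH)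
      - (C (2*(m:ℚ)+1) * C 2 * X * H * ratioQ * expand2 Lp) * hQP2
      + (C (2*(m:ℚ)+1) * C 2 * X * H) * hQP2
  have hc := congrArg (coeff (2*m+1)) hser
  rw [map_add, coeff_C_mul, coeff_C_mul, coeff_C_mul, coeff_C_mul, coeff_C_mul,
    coeff_succ_X_mul, coeff_succ_X_mul] at hc
  have hX2 : coeff (2*m+1) (X^2 * d⁄dX ℚ H) = 2*(m:ℚ) * coeff (2*m) H := by
    cases m with
    | zero =>
      rw [PowerSeries.coeff_X_pow_mul', if_neg (by omega)]
      norm_num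
    | succ k =>
      rw [PowerSeries.coeff_X_pow_mul', if_pos (by omega),
        show 2*(k+1)+1-2 = 2*k+1 by omega, coeff_derivative,
        show 2*k+1+1 = 2*(k+1) by omega]
      push_cast
      ring
  rw [hX2] at hc
  linarith [hc]

end

end Stmt15

/-- With `b_m = [t^m] ((1−e^{−t})/t)^{1/2}` and
`h_m = [y^m] (y²/(−log(1−y²)))^((m+1)/2)` (both square roots having constant
term 1), we have `h_{2m} = (2m+1)·b_m` for all `m ≥ 0`. -/
theorem stmt15 (m : ℕ) (b H : ℚ⟦X⟧)
    (hb : b ^ 2 = ratioB) (hb0 : constantCoeff b = 1)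
    (hH : H ^ 2 = ratioQ ^ (2 * m + 1)) (hH0 : constantCoeff H = 1) :
    coeff (2 * m) H = (2 * m + 1 : ℚ) * coeff m b := by
  classical
  have hHodd : ∀ j, ¬ Even j → coeff j H = 0 := by
    apply Stmt15.even_of_sq_even hH0
    intro j hj
    rw [hH, Stmt15.ratioQ_eq, ← Stmt15.expand2_pow]
    exact Stmt15.coeff_expand2_odd _ hj
  set G : ℚ⟦X⟧ := PowerSeries.mk fun k => coeff (2*k) H with hGdef
  have hGc : ∀ k, coeff k G = coeff (2*k) H := fun k => coeff_mk _ _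
  have hHG : Stmt15.expand2 G = H := by
    ext j
    by_cases hj : Even j
    · obtain ⟨r, rfl⟩ := hj
      rw [show r + r = 2*r by omega, Stmt15.coeff_expand2_even, hGc]
    · rw [Stmt15.coeff_expand2_odd _ hj, hHodd j hj]
  have hG2 : G^2 = Stmt15.Qu^(2*m+1) := by
    apply Stmt15.expand2_inj
    rw [Stmt15.expand2_pow G 2, hHG, Stmt15.expand2_pow, ← Stmt15.ratioQ_eq, hH]
  have hG0 : constantCoeff G = 1 := by
    rw [← coeff_zero_eq_constantCoeff_apply, hGc, show 2*0 = 0 by rfl,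
      coeff_zero_eq_constantCoeff_apply, hH0]
  set S : ℚ⟦X⟧ := G * Stmt15.Pu^m with hSdef
  have hS2 : S^2 = Stmt15.Qu := by
    have h1 : S^2 = G^2 * Stmt15.Pu^(2*m) := by
      rw [hSdef, mul_pow, ← pow_mul, mul_comm m 2]
    rw [h1, hG2]
    calc Stmt15.Qu^(2*m+1) * Stmt15.Pu^(2*m)
        = Stmt15.Qu * (Stmt15.Qu * Stmt15.Pu)^(2*m) := by rw [mul_pow]; ring
      _ = Stmt15.Qu := by rw [Stmt15.hQP, one_pow, mul_one]
  have hS0 : constantCoeff S = 1 := by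
    rw [hSdef, map_mul, map_pow, hG0, Stmt15.constPu, one_mul, one_pow]
  have hcompS : Stmt15.comp S = b := by
    refine Stmt15.sqrt_unique ?_ ?_ hb0
    · rw [hb, sq, ← Stmt15.comp_mul, ← sq, hS2, Stmt15.comp_Qu]
    · rw [Stmt15.comp_const]; exact hS0
  have hbm : coeff m b = coeff m (G * (Stmt15.Qu * Stmt15.Lp)) := by
    rw [← hcompS, Stmt15.comp_coeff_r]
    congr 1
    calc S * (Stmt15.Qu^(m+1) * Stmt15.Lp)
        = G * (Stmt15.Qu * Stmt15.Lp) * (Stmt15.Qu * Stmt15.Pu)^m := by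
          rw [hSdef, mul_pow]; ring
      _ = G * (Stmt15.Qu * Stmt15.Lp) := by rw [Stmt15.hQP, one_pow, mul_one]
  have hys := Stmt15.yside m H hH
  have hexp : coeff (2*m) (H * (ratioQ * Stmt15.expand2 Stmt15.Lp))
      = coeff m (G * (Stmt15.Qu * Stmt15.Lp)) := by
    rw [← hHG, Stmt15.ratioQ_eq, ← Stmt15.expand2_mul, ← Stmt15.expand2_mul,
      Stmt15.coeff_expand2_even]
  rw [hexp] at hys
  rw [← hys, hbm]
end

section
/- Define h_m = [v^m] (v²/(4·log((1+v/2)²/(1+v))))^{(m+1)/2} with the square root normalized to have constant term 1. Then for every m ≥ 0, h_{2m} = 4^{−m} · [y^m] (2e^y − 1)·(y/(1 − e^{−y}))^{1/2}, where the square root has constant term 1. -/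
open PowerSeries

/-- `4·log((1+v/2)²/(1+v)) = ∑_{k≥1} 4(−1)^(k−1)(2·(1/2)^k − 1) v^k/k`,
a power series with lowest term `v²·(1 + O(v))`. -/
noncomputable def denomLog : ℚ⟦X⟧ :=
  PowerSeries.mk fun k =>
    if k = 0 then 0 else 4 * (-1) ^ (k - 1) * (2 * (1 / 2 : ℚ) ^ k - 1) / k

namespace Stmt17Aux


lemma sum_range_even (k : ℕ) (f : ℕ → ℚ) (h : ∀ j, f (2*j+1) = 0) :
    ∑ a ∈ Finset.range (2*k+1), f a = ∑ i ∈ Finset.range (k+1), f (2*i) := by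
  induction k with
  | zero => simp
  | succ k ih =>
      have e : 2*(k+1)+1 = (2*k+1) + 1 + 1 := by ring
      rw [e, Finset.sum_range_succ, Finset.sum_range_succ, ih, Finset.sum_range_succ, h k]
      have e2 : 2*k+1+1 = 2*(k+1) := by ring
      rw [e2, add_zero, Finset.sum_range_succ, Finset.sum_range_succ]

/-- substitution `X ↦ X²` -/
noncomputable def sq2 (P : ℚ⟦X⟧) : ℚ⟦X⟧ :=
  PowerSeries.mk fun n => if 2 ∣ n then coeff (n/2) P else 0

lemma coeff_sq2_even (P : ℚ⟦X⟧) (k : ℕ) : coeff (2*k) (sq2 P) = coeff k P := by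
  simp [sq2]

lemma coeff_sq2_odd (P : ℚ⟦X⟧) (k : ℕ) : coeff (2*k+1) (sq2 P) = 0 := by
  have : ¬ (2 ∣ 2*k+1) := by omega
  simp [sq2, this]

lemma sq2_one : sq2 1 = 1 := by
  ext n
  rcases Nat.even_or_odd' n with ⟨k, hk | hk⟩ <;> subst hk
  · rcases Nat.eq_zero_or_pos k with h | h
    · subst h; simp [sq2]
    · have h1 : 2*k ≠ 0 := by omega
      rw [coeff_sq2_even]
      simp [coeff_one, Nat.pos_iff_ne_zero.mp h, h1]
  · have h1 : 2*k+1 ≠ 0 := by omega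
    rw [coeff_sq2_odd, coeff_one, if_neg h1]

lemma sq2_mul (P Q : ℚ⟦X⟧) : sq2 (P * Q) = sq2 P * sq2 Q := by
  ext n
  rcases Nat.even_or_odd' n with ⟨k, hk | hk⟩ <;> subst hk
  · rw [coeff_sq2_even, coeff_mul, coeff_mul,
      Finset.Nat.sum_antidiagonal_eq_sum_range_succ_mk,
      Finset.Nat.sum_antidiagonal_eq_sum_range_succ_mk,
      sum_range_even k (fun a => coeff a (sq2 P) * coeff (2*k - a) (sq2 Q))
        (by intro j; rw [coeff_sq2_odd, zero_mul])]
    apply Finset.sum_congr rfl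
    intro i hi
    have hik : i ≤ k := by simpa [Nat.lt_succ_iff] using hi
    have e : 2*k - 2*i = 2*(k-i) := by omega
    rw [e, coeff_sq2_even, coeff_sq2_even]
  · rw [coeff_sq2_odd, coeff_mul, Finset.Nat.sum_antidiagonal_eq_sum_range_succ_mk]
    symm
    apply Finset.sum_eq_zero
    intro a ha
    have ha' : a ≤ 2*k+1 := by simpa [Nat.lt_succ_iff] using ha
    rcases Nat.even_or_odd' a with ⟨j, hj | hj⟩ <;> subst hj
    · have e : 2*k+1 - 2*j = 2*(k-j)+1 := by omega
      rw [e, coeff_sq2_odd, mul_zero]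
    · rw [coeff_sq2_odd, zero_mul]


/-- substitution `X ↦ X²/4` -/
noncomputable def ev (P : ℚ⟦X⟧) : ℚ⟦X⟧ := rescale (1/2 : ℚ) (sq2 P)

lemma coeff_ev_even (P : ℚ⟦X⟧) (k : ℕ) :
    coeff (2*k) (ev P) = (1/2 : ℚ)^(2*k) * coeff k P := by
  rw [ev, coeff_rescale, coeff_sq2_even]

lemma coeff_ev_odd (P : ℚ⟦X⟧) (k : ℕ) : coeff (2*k+1) (ev P) = 0 := by
  rw [ev, coeff_rescale, coeff_sq2_odd, mul_zero]

lemma ev_one : ev 1 = 1 := by rw [ev, sq2_one, map_one]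

lemma ev_mul (P Q : ℚ⟦X⟧) : ev (P * Q) = ev P * ev Q := by
  rw [ev, sq2_mul, map_mul]; rfl

lemma constantCoeff_ev (P : ℚ⟦X⟧) :
    constantCoeff (ev P) = constantCoeff P := by
  have := coeff_ev_even P 0
  simpa using this

lemma ev_add (P Q : ℚ⟦X⟧) : ev (P + Q) = ev P + ev Q := by
  ext n
  rcases Nat.even_or_odd' n with ⟨k, hk | hk⟩ <;> subst hk
  · rw [map_add, coeff_ev_even, map_add, coeff_ev_even, coeff_ev_even]; ring
  · rw [map_add, coeff_ev_odd, coeff_ev_odd, coeff_ev_odd]; ring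

lemma ev_C (c : ℚ) : ev (C c) = C c := by
  ext n
  rcases Nat.even_or_odd' n with ⟨k, hk | hk⟩ <;> subst hk
  · rcases Nat.eq_zero_or_pos k with h | h
    · subst h
      have := constantCoeff_ev (C c)
      simpa using this
    · have h1 : 2*k ≠ 0 := by omega
      have h2 : k ≠ 0 := by omega
      rw [coeff_ev_even]
      simp [coeff_C, h1, h2]
  · have h1 : 2*k+1 ≠ 0 := by omega
    rw [coeff_ev_odd, coeff_C, if_neg h1]

lemma ev_sub (P Q : ℚ⟦X⟧) : ev (P - Q) = ev P - ev Q := by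
  have h := ev_add (P - Q) Q
  rw [sub_add_cancel] at h
  rw [h]; ring

lemma derivative_ev (P : ℚ⟦X⟧) :
    d⁄dX ℚ (ev P) = C (1/2) * ev (d⁄dX ℚ P) * X := by
  ext n
  cases n with
  | zero =>
      rw [coeff_derivative]
      have e : (0:ℕ)+1 = 2*0+1 := rfl
      rw [e, coeff_ev_odd, zero_mul, coeff_zero_eq_constantCoeff, map_mul,
        constantCoeff_X, mul_zero]
  | succ n =>
      rw [coeff_derivative, coeff_succ_mul_X, coeff_C_mul]
      rcases Nat.even_or_odd' n with ⟨k, hk | hk⟩ <;> subst hk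
      · have e : 2*k+1+1 = 2*(k+1) := by ring
        rw [e, coeff_ev_even, coeff_ev_even, coeff_derivative]
        push_cast
        ring
      · have e : 2*k+1+1+1 = 2*(k+1)+1 := by ring
        rw [e, coeff_ev_odd, coeff_ev_odd, zero_mul, mul_zero]


lemma sq2_X : sq2 X = X^2 := by
  ext n
  rcases Nat.even_or_odd' n with ⟨k, hk | hk⟩ <;> subst hk
  · rw [coeff_sq2_even, coeff_X, coeff_X_pow]
    rcases eq_or_ne k 1 with h | h
    · subst h; norm_num
    · have : 2*k ≠ 2 := by omega
      simp [h, this]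
  · have : 2*k+1 ≠ 2 := by omega
    rw [coeff_sq2_odd, coeff_X_pow, if_neg this]

lemma ev_X : ev X = C (1/4) * X^2 := by
  rw [ev, sq2_X, map_pow, rescale_X]
  rw [mul_pow, ← map_pow]
  norm_num

lemma ev_inv (P : ℚ⟦X⟧) (h : constantCoeff P ≠ 0) : ev P⁻¹ = (ev P)⁻¹ := by
  have h2 : constantCoeff (ev P) ≠ 0 := by rwa [constantCoeff_ev]
  rw [PowerSeries.eq_inv_iff_mul_eq_one h2, ← ev_mul,
    PowerSeries.inv_mul_cancel P h, ev_one]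

/-- coefficients of the square root of a power series with constant term 1 -/
noncomputable def sqAux (u : ℚ⟦X⟧) : ℕ → ℚ
  | 0 => 1
  | (n+1) => (coeff (n+1) u
      - ∑ i ∈ (Finset.range n).attach, sqAux u (i.1+1) * sqAux u (n - i.1)) / 2
  decreasing_by
  · have := i.2; rw [Finset.mem_range] at this; omega
  · omega

lemma sqAux_zero (u : ℚ⟦X⟧) : sqAux u 0 = 1 := by rw [sqAux]

lemma mk_sqAux_sq (u : ℚ⟦X⟧) (hu : constantCoeff u = 1) :
    (PowerSeries.mk (sqAux u))^2 = u := by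
  ext n
  rw [pow_two, coeff_mul, Finset.Nat.sum_antidiagonal_eq_sum_range_succ_mk]
  cases n with
  | zero =>
      simp only [Finset.sum_range_one, coeff_mk, Nat.sub_zero, sqAux_zero,
        coeff_zero_eq_constantCoeff, hu, mul_one]
  | succ n =>
      rw [Finset.sum_range_succ, Finset.sum_range_succ']
      simp only [coeff_mk]
      have e1 : ∀ i, n+1 - (i+1) = n - i := fun i => by omega
      have e2 : sqAux u (n+1) = (coeff (n+1) u
          - ∑ i ∈ (Finset.range n).attach, sqAux u (i.1+1) * sqAux u (n - i.1)) / 2 := by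
        rw [sqAux]
      rw [Finset.sum_attach (Finset.range n) (fun i => sqAux u (i+1) * sqAux u (n - i))] at e2
      simp only [e1, sqAux_zero, Nat.sub_zero, Nat.sub_self, one_mul, mul_one]
      rw [e2]
      ring

lemma exists_sqrt (u : ℚ⟦X⟧) (hu : constantCoeff u = 1) :
    ∃ s : ℚ⟦X⟧, s^2 = u ∧ constantCoeff s = 1 := by
  refine ⟨PowerSeries.mk (sqAux u), mk_sqAux_sq u hu, ?_⟩
  rw [← coeff_zero_eq_constantCoeff_apply, coeff_mk, sqAux_zero]



noncomputable def pcomp (F G : ℚ⟦X⟧) : ℚ⟦X⟧ :=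
  PowerSeries.mk fun n => ∑ j ∈ Finset.range (n+1), coeff j F * coeff n (G^j)

lemma coeff_pow_eq_zero {G : ℚ⟦X⟧} (hG : constantCoeff G = 0) {j n : ℕ} (h : n < j) :
    coeff n (G^j) = 0 := by
  have : (X:ℚ⟦X⟧)^j ∣ G^j := pow_dvd_pow_of_dvd (X_dvd_iff.mpr hG) j
  exact (X_pow_dvd_iff.mp this) n h

lemma coeff_pcomp {G : ℚ⟦X⟧} (hG : constantCoeff G = 0) (F : ℚ⟦X⟧) {n N : ℕ} (h : n ≤ N) :
    coeff n (pcomp F G) = ∑ j ∈ Finset.range (N+1), coeff j F * coeff n (G^j) := by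
  rw [pcomp, coeff_mk]
  apply Finset.sum_subset (Finset.range_subset_range.mpr (by omega))
  intro j hj1 hj
  rw [Finset.mem_range] at hj1 hj
  have : n < j := by omega
  rw [coeff_pow_eq_zero hG this, mul_zero]

lemma coeff_pcomp_mul {G : ℚ⟦X⟧} (hG : constantCoeff G = 0) (F W : ℚ⟦X⟧) (n : ℕ) :
    coeff n (pcomp F G * W) = ∑ j ∈ Finset.range (n+1), coeff j F * coeff n (G^j * W) := by
  rw [coeff_mul, Finset.Nat.sum_antidiagonal_eq_sum_range_succ_mk]
  have step : ∀ p ∈ Finset.range (n+1),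
      coeff p (pcomp F G) * coeff (n-p) W
      = ∑ j ∈ Finset.range (n+1), coeff j F * (coeff p (G^j) * coeff (n-p) W) := by
    intro p hp
    rw [Finset.mem_range] at hp
    rw [coeff_pcomp hG F (show p ≤ n by omega), Finset.sum_mul]
    apply Finset.sum_congr rfl
    intro j _
    ring
  rw [Finset.sum_congr rfl step, Finset.sum_comm]
  apply Finset.sum_congr rfl
  intro j _
  rw [← Finset.mul_sum, coeff_mul, Finset.Nat.sum_antidiagonal_eq_sum_range_succ_mk]

lemma pcomp_one {G : ℚ⟦X⟧} : pcomp 1 G = 1 := by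
  ext n
  rw [pcomp, coeff_mk]
  rcases Nat.eq_zero_or_pos n with h | h
  · subst h; simp
  · rw [Finset.sum_eq_single 0]
    · simp [coeff_pow_eq_zero, coeff_one, Nat.pos_iff_ne_zero.mp h]
    · intro j _ hj
      rw [coeff_one, if_neg hj, zero_mul]
    · intro h2; simp at h2
  -- may need adjusting

lemma pcomp_C {G : ℚ⟦X⟧} (c : ℚ) : pcomp (C c) G = C c := by
  ext n
  rw [pcomp, coeff_mk]
  rcases Nat.eq_zero_or_pos n with h | h
  · subst h; simp
  · rw [Finset.sum_eq_single 0]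
    · simp [coeff_C, Nat.pos_iff_ne_zero.mp h]
    · intro j _ hj
      rw [coeff_C, if_neg hj, zero_mul]
    · intro h2; simp at h2

lemma pcomp_X {G : ℚ⟦X⟧} (hG : constantCoeff G = 0) : pcomp X G = G := by
  ext n
  rw [pcomp, coeff_mk]
  rcases Nat.eq_zero_or_pos n with h | h
  · subst h
    simp [hG]
  · rw [Finset.sum_eq_single 1]
    · rw [coeff_X, if_pos rfl, pow_one, one_mul]
    · intro j _ hj
      rw [coeff_X, if_neg hj, zero_mul]
    · intro h2
      rw [Finset.mem_range] at h2
      omega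

lemma pcomp_add {G : ℚ⟦X⟧} (F H : ℚ⟦X⟧) : pcomp (F + H) G = pcomp F G + pcomp H G := by
  ext n
  rw [map_add, pcomp, pcomp, pcomp, coeff_mk, coeff_mk, coeff_mk, ← Finset.sum_add_distrib]
  apply Finset.sum_congr rfl
  intro j _
  rw [map_add]
  ring

lemma pcomp_sub {G : ℚ⟦X⟧} (F H : ℚ⟦X⟧) : pcomp (F - H) G = pcomp F G - pcomp H G := by
  have h := pcomp_add (G := G) (F - H) H
  rw [sub_add_cancel] at h
  rw [h]; ring

lemma constantCoeff_pcomp {G : ℚ⟦X⟧} (F : ℚ⟦X⟧) :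
    constantCoeff (pcomp F G) = constantCoeff F := by
  rw [← coeff_zero_eq_constantCoeff_apply, pcomp, coeff_mk]
  simp

lemma pcomp_mul {G : ℚ⟦X⟧} (hG : constantCoeff G = 0) (F H : ℚ⟦X⟧) :
    pcomp (F * H) G = pcomp F G * pcomp H G := by
  ext n
  rw [coeff_pcomp_mul hG F (pcomp H G) n, pcomp, coeff_mk]
  have step : ∀ j ∈ Finset.range (n+1),
      coeff j F * coeff n (G^j * pcomp H G)
      = ∑ i ∈ Finset.range (n+1), coeff j F * coeff i H * coeff n (G^(j+i)) := by
    intro j _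
    rw [mul_comm (G^j) (pcomp H G), coeff_pcomp_mul hG H (G^j) n, Finset.mul_sum]
    apply Finset.sum_congr rfl
    intro i _
    rw [← pow_add, add_comm i j]
    ring
  rw [Finset.sum_congr rfl step]
  -- Now: ∑_{k≤n} coeff_k (F*H) coeff_n G^k = ∑_{j≤n} ∑_{i≤n} F_j H_i coeff_n G^{j+i}
  have lhs : ∀ k ∈ Finset.range (n+1),
      coeff k (F*H) * coeff n (G^k)
      = ∑ a ∈ Finset.range (k+1), coeff a F * coeff (k-a) H * coeff n (G^k) := by
    intro k _
    rw [coeff_mul, Finset.Nat.sum_antidiagonal_eq_sum_range_succ_mk, Finset.sum_mul]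
  rw [Finset.sum_congr rfl lhs]
  -- restrict RHS double sum to i < n+1-j (other terms vanish)
  have shrink : ∀ j ∈ Finset.range (n+1),
      (∑ i ∈ Finset.range (n+1), coeff j F * coeff i H * coeff n (G^(j+i)))
      = ∑ i ∈ Finset.range (n+1-j), coeff j F * coeff i H * coeff n (G^(j+i)) := by
    intro j hj
    rw [Finset.mem_range] at hj
    symm
    apply Finset.sum_subset (Finset.range_subset_range.mpr (by omega))
    intro i _ hi2
    rw [Finset.mem_range] at hi2
    rw [coeff_pow_eq_zero hG (show n < j + i by omega), mul_zero]
  rw [Finset.sum_congr rfl shrink]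
  rw [Finset.sum_sigma', Finset.sum_sigma']
  apply Finset.sum_nbij' (fun p => (⟨p.2, p.1 - p.2⟩ : (_ : ℕ) × ℕ))
    (fun p => (⟨p.1 + p.2, p.1⟩ : (_ : ℕ) × ℕ))
  · intro p hp
    simp only [Finset.mem_sigma, Finset.mem_range] at hp ⊢
    omega
  · intro p hp
    simp only [Finset.mem_sigma, Finset.mem_range] at hp ⊢
    omega
  · intro p hp
    simp only [Finset.mem_sigma, Finset.mem_range] at hp
    ext <;> simp <;> omega
  · intro p hp
    simp only [Finset.mem_sigma, Finset.mem_range] at hp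
    ext <;> simp <;> omega
  · intro p hp
    simp only [Finset.mem_sigma, Finset.mem_range] at hp
    have e : p.2 + (p.1 - p.2) = p.1 := by omega
    dsimp only
    rw [e]


lemma pcomp_derivative {G : ℚ⟦X⟧} (hG : constantCoeff G = 0) (F : ℚ⟦X⟧) :
    d⁄dX ℚ (pcomp F G) = pcomp (d⁄dX ℚ F) G * d⁄dX ℚ G := by
  ext n
  rw [coeff_derivative, coeff_pcomp hG F (show n+1 ≤ n+1 from le_refl _),
    coeff_pcomp_mul hG (d⁄dX ℚ F) (d⁄dX ℚ G) n, Finset.sum_mul]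
  have lhs : ∀ j ∈ Finset.range (n+2),
      coeff j F * coeff (n+1) (G^j) * ((n:ℚ)+1)
      = coeff j F * (j:ℚ) * coeff n (G^(j-1) * d⁄dX ℚ G) := by
    intro j _
    have : coeff (n+1) (G^j) * ((n:ℚ)+1) = coeff n (d⁄dX ℚ (G^j)) := by
      rw [coeff_derivative]
    rw [mul_assoc, this, Derivation.leibniz_pow, map_nsmul, nsmul_eq_mul]
    rw [smul_eq_mul]
    ring
  rw [Finset.sum_congr rfl lhs, Finset.sum_range_succ']
  simp only [Nat.cast_zero, mul_zero, zero_mul, add_zero, Nat.cast_ofNat]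
  apply Finset.sum_congr rfl
  intro i _
  rw [coeff_derivative]
  have e : i + 1 - 1 = i := by omega
  rw [e]
  push_cast
  ring



lemma coeff_denomLog_deriv (k : ℕ) :
    coeff k (d⁄dX ℚ denomLog) = 4 * (-1)^k * ((1/2:ℚ)^k - 1) := by
  rw [coeff_derivative, denomLog, coeff_mk, if_neg (Nat.succ_ne_zero k)]
  have e : k + 1 - 1 = k := rfl
  rw [e]
  have h : ((k:ℚ) + 1) ≠ 0 := by positivity
  field_simp
  rw [pow_succ]
  push_cast
  ring

lemma two_eq_C : (2 : ℚ⟦X⟧) = C 2 := by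
  rw [show (2:ℚ) = (2:ℕ) by norm_num, map_natCast]
  norm_num

lemma constantCoeff_denomLog_deriv : constantCoeff (d⁄dX ℚ denomLog) = 0 := by
  rw [← coeff_zero_eq_constantCoeff_apply, coeff_denomLog_deriv]
  norm_num

lemma L_ODE : d⁄dX ℚ denomLog * ((2 + X) * (1 + X)) = C 4 * X := by
  have h3 : (C (3:ℚ) : ℚ⟦X⟧) = C 2 + 1 := by rw [← map_one C, ← map_add]; norm_num
  have expand : d⁄dX ℚ denomLog * (((2:ℚ⟦X⟧) + X) * (1 + X))
      = C 2 * d⁄dX ℚ denomLog + C 3 * (d⁄dX ℚ denomLog * X)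
        + (d⁄dX ℚ denomLog * X) * X := by
    rw [two_eq_C, h3]
    ring
  rw [expand]
  ext n
  rw [map_add, map_add, coeff_C_mul, coeff_C_mul, coeff_C_mul]
  match n with
  | 0 =>
      simp [constantCoeff_denomLog_deriv]
  | 1 =>
      rw [coeff_succ_mul_X, show (1:ℕ) = 0 + 1 from rfl, coeff_succ_mul_X,
        coeff_zero_eq_constantCoeff, map_mul, constantCoeff_X, mul_zero]
      rw [coeff_denomLog_deriv, ← coeff_zero_eq_constantCoeff_apply, coeff_denomLog_deriv]
      rw [coeff_X, if_pos rfl]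
      norm_num
  | (k+2) =>
      rw [coeff_succ_mul_X, coeff_succ_mul_X, coeff_succ_mul_X,
        coeff_denomLog_deriv, coeff_denomLog_deriv, coeff_denomLog_deriv]
      rw [coeff_X, if_neg (by omega)]
      simp only [pow_succ]
      ring

/-- the unit `u` with `denomLog = X² * u` -/
noncomputable def uS : ℚ⟦X⟧ := PowerSeries.mk fun n => coeff (n+2) denomLog

lemma denomLog_eq : denomLog = X^2 * uS := by
  ext n
  match n with
  | 0 => rw [coeff_X_pow_mul' uS 2 0, if_neg (by omega)]
         rw [denomLog, coeff_mk, if_pos rfl]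
  | 1 => rw [coeff_X_pow_mul' uS 2 1, if_neg (by omega)]
         rw [denomLog, coeff_mk, if_neg (by omega)]
         norm_num
  | (k+2) =>
      rw [coeff_X_pow_mul uS 2 k, uS, coeff_mk]

lemma constantCoeff_uS : constantCoeff uS = 1 := by
  rw [← coeff_zero_eq_constantCoeff_apply, uS, coeff_mk, denomLog, coeff_mk, if_neg (by omega)]
  norm_num

lemma X_mul_ratioB : X * ratioB = 1 - rescale (-1) (exp ℚ) := by
  ext n
  rw [map_sub]
  match n with
  | 0 =>
      have h1 : constantCoeff (rescale (-1) (exp ℚ)) = 1 := by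
        rw [← coeff_zero_eq_constantCoeff_apply, coeff_rescale, coeff_exp]
        norm_num
      simp [h1]
  | (k+1) =>
      rw [mul_comm X ratioB, coeff_succ_mul_X, ratioB, coeff_mk, coeff_one, if_neg (by omega),
        coeff_rescale, coeff_exp]
      have : ((k+1).factorial : ℚ) ≠ 0 := by positivity
      field_simp
      rw [pow_succ]
      push_cast
      ring_nf
      rw [add_comm 1 k, mul_inv_cancel₀ this, one_mul]

lemma exp_mul_rescale_neg : exp ℚ * rescale (-1) (exp ℚ) = 1 :=
  PowerSeries.exp_mul_exp_neg_eq_one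



lemma derivative_exp_q : d⁄dX ℚ (exp ℚ) = exp ℚ := by
  ext n
  rw [coeff_derivative, coeff_exp, coeff_exp]
  simp only [Algebra.algebraMap_self_apply]
  rw [Nat.factorial_succ]
  have h1 : ((n.factorial : ℚ)) ≠ 0 := by positivity
  have h2 : ((n:ℚ)+1) ≠ 0 := by positivity
  field_simp
  norm_cast

lemma constantCoeff_ratioB : constantCoeff ratioB = 1 := by
  rw [← coeff_zero_eq_constantCoeff_apply, ratioB, coeff_mk]
  norm_num

lemma sq_one_of_const_one {t : ℚ⟦X⟧} (h : t^2 = 1) (h0 : constantCoeff t = 1) : t = 1 := by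
  have hf : (t - 1) * (t + 1) = 0 := by linear_combination h
  rcases mul_eq_zero.mp hf with h1 | h1
  · linear_combination h1
  · exfalso
    have := congrArg constantCoeff h1
    rw [map_add, h0, map_one, map_zero] at this
    norm_num at this

lemma eq_of_sq_eq_sq {s t : ℚ⟦X⟧} (h : s^2 = t^2)
    (h0 : constantCoeff s = constantCoeff t) (hne : constantCoeff s ≠ 0) : s = t := by
  have hf : (s - t) * (s + t) = 0 := by linear_combination h
  rcases mul_eq_zero.mp hf with h1 | h1
  · linear_combination h1
  · exfalso
    have := congrArg constantCoeff h1
    rw [map_add, h0, map_zero] at this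
    apply hne
    rw [h0]
    linarith

lemma ode_unique (y z W M : ℚ⟦X⟧) (hy : d⁄dX ℚ y * W = M * y) (hz : d⁄dX ℚ z * W = M * z)
    (hW : W ≠ 0) (hz0 : constantCoeff z ≠ 0)
    (h0 : constantCoeff y = constantCoeff z) : y = z := by
  have hzne : z ≠ 0 := fun h => hz0 (by rw [h, map_zero])
  have hcross : d⁄dX ℚ y * z = d⁄dX ℚ z * y := by
    apply mul_right_cancel₀ hW
    calc d⁄dX ℚ y * z * W = (d⁄dX ℚ y * W) * z := by ring
      _ = M * y * z := by rw [hy]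
      _ = (M * z) * y := by ring
      _ = (d⁄dX ℚ z * W) * y := by rw [hz]
      _ = d⁄dX ℚ z * y * W := by ring
  have hzz : z⁻¹ * z = 1 := PowerSeries.inv_mul_cancel z hz0
  have key : d⁄dX ℚ (y * z⁻¹) * (z * z) = 0 := by
    rw [Derivation.leibniz, smul_eq_mul, smul_eq_mul, derivative_inv']
    calc (y * (-z⁻¹ ^ 2 * d⁄dX ℚ z) + z⁻¹ * d⁄dX ℚ y) * (z * z)
        = -((d⁄dX ℚ z * y) * ((z⁻¹*z) * (z⁻¹*z))) + (d⁄dX ℚ y * z) * (z⁻¹ * z) := by ring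
      _ = 0 := by rw [hzz, hcross]; ring
  have hdq : d⁄dX ℚ (y * z⁻¹) = 0 := by
    rcases mul_eq_zero.mp key with h | h
    · exact h
    · exact absurd h (mul_ne_zero hzne hzne)
  have hq1 : y * z⁻¹ = 1 := by
    have := derivative.ext (f := y * z⁻¹) (g := 1) (by simp [hdq]) ?_
    · exact this
    · rw [map_mul, map_one, constantCoeff_inv, h0, mul_inv_cancel₀ hz0]
  calc y = y * (z⁻¹ * z) := by rw [hzz, mul_one]
    _ = (y * z⁻¹) * z := by ring
    _ = z := by rw [hq1, one_mul]

lemma coeff_pow_mul_eq_zero {f : ℚ⟦X⟧} (hf : constantCoeff f = 0) {j k : ℕ} (h : k < j)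
    (W : ℚ⟦X⟧) : coeff k (f^j * W) = 0 := by
  have hd : (X:ℚ⟦X⟧)^j ∣ f^j * W :=
    Dvd.dvd.mul_right (pow_dvd_pow_of_dvd (X_dvd_iff.mpr hf) j) W
  exact X_pow_dvd_iff.mp hd k h


lemma key_vanish (ut : ℚ⟦X⟧) (hut0 : constantCoeff ut = 1) (k : ℕ) (hk : 1 ≤ k) :
    coeff k ((ut⁻¹)^(k+1) * (ut + X * d⁄dX ℚ ut)) = 0 := by
  have hut_ne : constantCoeff ut ≠ 0 := by rw [hut0]; norm_num
  have hinv : ut⁻¹ * ut = 1 := PowerSeries.inv_mul_cancel ut hut_ne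
  have split : (ut⁻¹)^(k+1) * (ut + X * d⁄dX ℚ ut)
      = (ut⁻¹)^k + ((ut⁻¹)^(k+1) * d⁄dX ℚ ut) * X := by
    have h1 : (ut⁻¹)^(k+1) * ut = (ut⁻¹)^k := by
      rw [pow_succ, mul_assoc, hinv, mul_one]
    calc (ut⁻¹)^(k+1) * (ut + X * d⁄dX ℚ ut)
        = (ut⁻¹)^(k+1) * ut + ((ut⁻¹)^(k+1) * d⁄dX ℚ ut) * X := by ring
      _ = (ut⁻¹)^k + ((ut⁻¹)^(k+1) * d⁄dX ℚ ut) * X := by rw [h1]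
  rw [split, map_add]
  obtain ⟨k', rfl⟩ : ∃ k', k = k' + 1 := ⟨k - 1, by omega⟩
  rw [coeff_succ_mul_X]
  -- derivative of (ut⁻¹)^(k'+1)
  have hdpow : d⁄dX ℚ ((ut⁻¹)^(k'+1)) = -(((k'+1:ℕ)) • ((ut⁻¹)^(k'+2) * d⁄dX ℚ ut)) := by
    rw [Derivation.leibniz_pow, derivative_inv']
    have e : k' + 1 - 1 = k' := by omega
    rw [e, ← smul_neg]
    simp only [smul_eq_mul, nsmul_eq_mul]
    ring
  -- now: coeff (k'+1) ((ut⁻¹)^(k'+1)) + coeff k' ((ut⁻¹)^(k'+2) * d ut) = 0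
  have hco : coeff k' (d⁄dX ℚ ((ut⁻¹)^(k'+1)))
      = coeff (k'+1) ((ut⁻¹)^(k'+1)) * ((k':ℚ)+1) := coeff_derivative _ _
  rw [hdpow] at hco
  rw [map_neg, map_nsmul, nsmul_eq_mul] at hco
  -- hco : -((k'+1) * coeff k' ((ut⁻¹)^(k'+2) * d ut)) = coeff (k'+1) ((ut⁻¹)^(k'+1)) * (k'+1)
  have hne : ((k':ℚ)+1) ≠ 0 := by positivity
  have e2 : k' + 1 + 1 = k' + 2 := by omega
  rw [e2]
  have : ((k':ℚ)+1) * (coeff (k'+1) ((ut⁻¹)^(k'+1)) + coeff k' ((ut⁻¹)^(k'+2) * d⁄dX ℚ ut))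
      = 0 := by
    push_cast at hco ⊢
    linear_combination -hco
  rcases mul_eq_zero.mp this with h | h
  · exact absurd h hne
  · exact h

lemma lagrange_core (m : ℕ) (ut GD : ℚ⟦X⟧) (hut0 : constantCoeff ut = 1)
    (hmain : pcomp GD (X * ut) * d⁄dX ℚ (X * ut) = 1) :
    coeff (2*m) ((ut⁻¹)^(2*m+1)) = coeff (2*m) GD := by
  have hfc : constantCoeff (X * ut) = 0 := by rw [map_mul, constantCoeff_X, zero_mul]
  have hut_ne : constantCoeff ut ≠ 0 := by rw [hut0]; norm_num
  have hinv : ut⁻¹ * ut = 1 := PowerSeries.inv_mul_cancel ut hut_ne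
  have hdf : d⁄dX ℚ (X * ut) = ut + X * d⁄dX ℚ ut := by
    rw [Derivation.leibniz, smul_eq_mul, smul_eq_mul, derivative_X, mul_one]
    ring
  set df := d⁄dX ℚ (X * ut) with hdf_def
  set K : ℚ⟦X⟧ := ∑ j ∈ Finset.range (2*m+1), C (coeff j GD) * (X*ut)^j with hK
  have hKcoeff : ∀ k, k ≤ 2*m → coeff k (K * df) = coeff k 1 := by
    intro k hk
    rw [← hmain, coeff_pcomp_mul hfc GD df k, hK, Finset.sum_mul, map_sum]
    have l1 : ∀ j ∈ Finset.range (2*m+1),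
        coeff k (C (coeff j GD) * (X*ut)^j * df)
        = coeff j GD * coeff k ((X*ut)^j * df) := by
      intro j _
      rw [mul_assoc, coeff_C_mul]
    rw [Finset.sum_congr rfl l1]
    symm
    apply Finset.sum_subset (Finset.range_subset_range.mpr (by omega))
    intro j hj1 hj2
    rw [Finset.mem_range] at hj1 hj2
    rw [coeff_pow_mul_eq_zero hfc (show k < j by omega), mul_zero]
  have split : coeff (2*m) ((ut⁻¹)^(2*m+1))
      = coeff (2*m) ((ut⁻¹)^(2*m+1) * (K * df)) := by
    have hdecomp : (ut⁻¹)^(2*m+1)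
        = (ut⁻¹)^(2*m+1) * (K * df) + (ut⁻¹)^(2*m+1) * (1 - K * df) := by ring
    conv_lhs => rw [hdecomp]
    rw [map_add]
    have z : coeff (2*m) ((ut⁻¹)^(2*m+1) * (1 - K * df)) = 0 := by
      rw [coeff_mul, Finset.Nat.sum_antidiagonal_eq_sum_range_succ_mk]
      apply Finset.sum_eq_zero
      intro p hp
      rw [Finset.mem_range] at hp
      have : coeff (2*m - p) (1 - K * df) = 0 := by
        rw [map_sub, hKcoeff (2*m-p) (by omega), sub_self]
      rw [this, mul_zero]
    rw [z, add_zero]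
  rw [split]
  have expand : (ut⁻¹)^(2*m+1) * (K * df)
      = ∑ j ∈ Finset.range (2*m+1),
          C (coeff j GD) * ((ut⁻¹)^(2*m+1) * ((X*ut)^j * df)) := by
    rw [hK, Finset.sum_mul, Finset.mul_sum]
    apply Finset.sum_congr rfl
    intro j _
    ring
  rw [expand, map_sum]
  have per : ∀ j ∈ Finset.range (2*m+1),
      coeff (2*m) (C (coeff j GD) * ((ut⁻¹)^(2*m+1) * ((X*ut)^j * df)))
      = if j = 2*m then coeff j GD else 0 := by
    intro j hj
    rw [Finset.mem_range] at hj
    have hj' : j ≤ 2*m := by omega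
    rw [coeff_C_mul]
    have collapse : (ut⁻¹)^(2*m+1) * ((X*ut)^j * df)
        = X^j * ((ut⁻¹)^(2*m+1-j) * df) := by
      rw [mul_pow]
      have e1 : (ut⁻¹)^(2*m+1) = (ut⁻¹)^(2*m+1-j) * (ut⁻¹)^j := by
        rw [← pow_add]
        congr 1
        omega
      have e2 : (ut⁻¹)^j * ut^j = 1 := by rw [← mul_pow, hinv, one_pow]
      rw [e1]
      calc (ut⁻¹)^(2*m+1-j) * (ut⁻¹)^j * (X^j * ut^j * df)
          = X^j * ((ut⁻¹)^(2*m+1-j) * df) * ((ut⁻¹)^j * ut^j) := by ring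
        _ = X^j * ((ut⁻¹)^(2*m+1-j) * df) := by rw [e2, mul_one]
      -- may need e1 first
    rw [collapse, coeff_X_pow_mul' ((ut⁻¹)^(2*m+1-j) * df) j (2*m), if_pos hj']
    rcases eq_or_ne j (2*m) with he | hne
    · subst he
      rw [if_pos rfl]
      have e0 : 2*m - 2*m = 0 := by omega
      have e1 : 2*m+1 - 2*m = 1 := by omega
      rw [e0, e1, pow_one, coeff_zero_eq_constantCoeff, map_mul, hdf]
      rw [map_add, map_mul, constantCoeff_X, zero_mul, add_zero, hut0,
        constantCoeff_inv, hut0, inv_one, one_mul, mul_one]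
    · rw [if_neg hne]
      have hk1 : 1 ≤ 2*m - j := by omega
      have e3 : 2*m+1-j = (2*m-j)+1 := by omega
      rw [e3, hdf]
      rw [key_vanish ut hut0 (2*m-j) hk1, mul_zero]
  rw [Finset.sum_congr rfl per, Finset.sum_ite_eq' (Finset.range (2*m+1)) (2*m)
    (fun j => coeff j GD), if_pos (by rw [Finset.mem_range]; omega)]

end Stmt17Aux

open Stmt17Aux

/-- With `h_m = [v^m] (v²/(4·log((1+v/2)²/(1+v))))^((m+1)/2)` (square root with
constant term 1), we have `h_{2m} = 4^{−m}·[y^m] (2e^y − 1)·(y/(1−e^{−y}))^{1/2}`.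
Here `Q3 = v²/(4·log((1+v/2)²/(1+v)))` is characterized by `Q3·denomLog = v²`,
and `w = (y/(1−e^{−y}))^{1/2}` by `w² = ratioB⁻¹` with constant term 1. -/
theorem stmt17 (m : ℕ) (Q3 H w : ℚ⟦X⟧)
    (hQ3 : Q3 * denomLog = X ^ 2)
    (hH : H ^ 2 = Q3 ^ (2 * m + 1)) (hH0 : constantCoeff H = 1)
    (hw : w ^ 2 = ratioB⁻¹) (hw0 : constantCoeff w = 1) :
    coeff (2 * m) H =
      ((4 : ℚ) ^ m)⁻¹ * coeff m ((2 * PowerSeries.exp ℚ - 1) * w) := by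

  have hXne : (X:ℚ⟦X⟧) ≠ 0 := X_ne_zero
  have hX2ne : (X:ℚ⟦X⟧)^2 ≠ 0 := pow_ne_zero 2 hXne
  have h2ne : (2:ℚ⟦X⟧) ≠ 0 := by
    intro h
    have := congrArg constantCoeff h
    rw [map_ofNat, map_zero] at this
    norm_num at this
  -- v-side setup
  have hQu : Q3 * uS = 1 := by
    apply mul_left_cancel₀ hX2ne
    rw [mul_one]
    calc X^2 * (Q3 * uS) = Q3 * (X^2 * uS) := by ring
      _ = Q3 * denomLog := by rw [← denomLog_eq]
      _ = X^2 := hQ3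
  obtain ⟨ut, hut2, hut0⟩ := exists_sqrt uS constantCoeff_uS
  have hut_ne : constantCoeff ut ≠ 0 := by rw [hut0]; norm_num
  have hutinv : ut⁻¹ * ut = 1 := PowerSeries.inv_mul_cancel ut hut_ne
  have hHform : H = (ut⁻¹)^(2*m+1) := by
    have h1 : (H * ut^(2*m+1))^2 = 1 := by
      calc (H * ut^(2*m+1))^2 = H^2 * (ut^2)^(2*m+1) := by ring
        _ = Q3^(2*m+1) * uS^(2*m+1) := by rw [hH, hut2]
        _ = (Q3 * uS)^(2*m+1) := by rw [mul_pow]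
        _ = 1 := by rw [hQu, one_pow]
    have h0 : constantCoeff (H * ut^(2*m+1)) = 1 := by
      rw [map_mul, map_pow, hH0, hut0, one_pow, one_mul]
    have h2 : H * ut^(2*m+1) = 1 := sq_one_of_const_one h1 h0
    have h3 : (ut⁻¹)^(2*m+1) * ut^(2*m+1) = 1 := by
      rw [← mul_pow, hutinv, one_pow]
    have hne : ut^(2*m+1) ≠ 0 :=
      pow_ne_zero _ (fun h => hut_ne (by rw [h, map_zero]))
    exact mul_right_cancel₀ hne (h2.trans h3.symm)
  have hfc : constantCoeff (X * ut) = 0 := by rw [map_mul, constantCoeff_X, zero_mul]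
  have hf2 : (X*ut)^2 = X^2 * uS := by rw [mul_pow, hut2]
  have hdfL : d⁄dX ℚ denomLog = 2 * (X*ut) * d⁄dX ℚ (X*ut) := by
    have : denomLog = (X*ut) * (X*ut) := by rw [← pow_two, hf2, ← denomLog_eq]
    rw [this, Derivation.leibniz]
    simp only [smul_eq_mul]
    ring
  have hfODE : ut * d⁄dX ℚ (X*ut) * ((2+X)*(1+X)) = 2 := by
    apply mul_left_cancel₀ h2ne
    apply mul_left_cancel₀ hXne
    have c4 : C (4:ℚ) * X = X * (2 * 2) := by
      rw [show (4:ℚ) = 2*2 by norm_num, map_mul, ← two_eq_C]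
      ring
    calc X * (2 * (ut * d⁄dX ℚ (X*ut) * ((2+X)*(1+X))))
        = (2 * (X*ut) * d⁄dX ℚ (X*ut)) * ((2+X)*(1+X)) := by ring
      _ = d⁄dX ℚ denomLog * ((2+X)*(1+X)) := by rw [hdfL]
      _ = C 4 * X := L_ODE
      _ = X * (2 * 2) := c4
  -- w-side
  set A := ev (exp ℚ) with hA_def
  have hA' : d⁄dX ℚ A = C (1/2) * A * X := by
    rw [hA_def, derivative_ev, derivative_exp_q]
  set P := pcomp A (X*ut) with hP_def
  have hPconst : constantCoeff P = 1 := by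
    rw [hP_def, constantCoeff_pcomp, hA_def, constantCoeff_ev, constantCoeff_exp]
  have half_two : C (1/2) * 2 = (1:ℚ⟦X⟧) := by
    rw [two_eq_C, ← map_mul]
    norm_num
  have hPode : d⁄dX ℚ P * ((2+X)*(1+X)) = X * P := by
    have h1 : d⁄dX ℚ P = C (1/2) * P * (X*ut) * d⁄dX ℚ (X*ut) := by
      rw [hP_def, pcomp_derivative hfc, hA', pcomp_mul hfc, pcomp_mul hfc,
        pcomp_C, pcomp_X hfc]
    calc d⁄dX ℚ P * ((2+X)*(1+X))
        = C (1/2) * P * X * (ut * d⁄dX ℚ (X*ut) * ((2+X)*(1+X))) := by rw [h1]; ring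
      _ = C (1/2) * 2 * (X * P) := by rw [hfODE]; ring
      _ = X * P := by rw [half_two, one_mul]
  -- P * ((1+X)*4) = (2+X)^2 via ODE uniqueness
  have hd1X : d⁄dX ℚ ((1:ℚ⟦X⟧)+X) = 1 := by
    rw [map_add, derivative_X, Derivation.map_one_eq_zero, zero_add]
  have hd2X : d⁄dX ℚ ((2:ℚ⟦X⟧)+X) = 1 := by
    rw [map_add, derivative_X, two_eq_C, derivative_C, zero_add]
  have h2Xne : ((2:ℚ⟦X⟧)+X) ≠ 0 := by
    intro h
    have := congrArg constantCoeff h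
    rw [map_add, constantCoeff_X, map_ofNat, map_zero, add_zero] at this
    norm_num at this
  have hP : P * ((1+X) * 4) = (2+X)^2 := by
    apply ode_unique _ _ (2+X) 2 _ _ h2Xne
    · -- constantCoeff (2+X)^2 ≠ 0
      rw [map_pow, map_add, constantCoeff_X, map_ofNat, add_zero]
      norm_num
    · -- constant coefficients equal
      rw [map_mul, map_mul, map_add, map_pow, map_add, constantCoeff_X, hPconst,
        map_one, map_ofNat, map_ofNat]
      norm_num
    · -- ODE for Y
      have hdY : d⁄dX ℚ (P * ((1+X)*4)) = d⁄dX ℚ P * ((1+X)*4) + P * 4 := by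
        rw [Derivation.leibniz]
        simp only [smul_eq_mul]
        have h4d : d⁄dX ℚ ((1+X)*(4:ℚ⟦X⟧)) = 4 := by
          rw [Derivation.leibniz]
          simp only [smul_eq_mul]
          rw [hd1X,
            show (4:ℚ⟦X⟧) = C 4 by rw [show (4:ℚ) = 2*2 by norm_num, map_mul, ← two_eq_C]; norm_num,
            derivative_C]
          ring
        rw [h4d]
        ring
      rw [hdY]
      calc (d⁄dX ℚ P * ((1+X)*4) + P * 4) * (2+X)
          = (d⁄dX ℚ P * ((2+X)*(1+X))) * 4 + P * 4 * (2+X) := by ring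
        _ = X * P * 4 + P * 4 * (2+X) := by rw [hPode]
        _ = 2 * (P * ((1+X)*4)) := by ring
    · -- ODE for Z
      have hdZ : d⁄dX ℚ (((2:ℚ⟦X⟧)+X)^2) = 2 * (2+X) := by
        rw [pow_two, Derivation.leibniz]
        simp only [smul_eq_mul]
        rw [hd2X]
        ring
      rw [hdZ]
      ring
  -- PB relation
  set PB := pcomp (ev ratioB) (X*ut) with hPB_def
  have hBconst : constantCoeff ratioB ≠ 0 := by rw [constantCoeff_ratioB]; norm_num
  have e1 : C (1/4) * (X^2 * ev ratioB) = 1 - ev (rescale (-1) (exp ℚ)) := by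
    have h := congrArg ev X_mul_ratioB
    rw [ev_mul, ev_X, ev_sub, ev_one] at h
    rw [← h]
    ring
  have hAR : A * ev (rescale (-1) (exp ℚ)) = 1 := by
    rw [hA_def, ← ev_mul, exp_mul_rescale_neg, ev_one]
  set R := pcomp (ev (rescale (-1) (exp ℚ))) (X*ut) with hR_def
  have e3 : P * R = 1 := by
    rw [hP_def, hR_def, ← pcomp_mul hfc, hAR, pcomp_one]
  have e2 : C (1/4) * ((X*ut)^2 * PB) = 1 - R := by
    have h := congrArg (fun Z => pcomp Z (X*ut)) e1
    rw [pcomp_sub, pcomp_one] at h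
    rw [hPB_def, hR_def]
    rw [← h]
    rw [pcomp_mul hfc, pcomp_mul hfc, pcomp_C, show (X:ℚ⟦X⟧)^2 = X*X from sq X,
      pcomp_mul hfc, pcomp_X hfc, ← sq]
  have h44 : C (1/4) * (4:ℚ⟦X⟧) = 1 := by
    rw [show (4:ℚ⟦X⟧) = C 4 by rw [show (4:ℚ) = 2*2 by norm_num, map_mul, ← two_eq_C]; norm_num,
      ← map_mul]
    norm_num
  have hPB : PB * ((2+X)^2 * uS) = 4 := by
    apply mul_left_cancel₀ hX2ne
    linear_combination (-(PB*(2+X)^2))*hf2 + (4 - (X*ut)^2*PB)*hP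
      + (-(4*(X*ut)^2*PB*P*(1+X)))*h44 + (16*P*(1+X))*e2 + (-(16*(1+X)))*e3
  -- V := pcomp (ev w) f
  set V := pcomp (ev w) (X*ut) with hV_def
  have hVPB : V^2 * PB = 1 := by
    have h1 : (ev w)^2 * ev ratioB = 1 := by
      rw [pow_two, ← ev_mul, ← pow_two, hw, ← ev_mul,
        PowerSeries.inv_mul_cancel ratioB hBconst, ev_one]
    rw [hV_def, hPB_def, pow_two, ← pcomp_mul hfc, ← pcomp_mul hfc, ← pow_two, h1, pcomp_one]
  have hV : 2*V = (2+X)*ut := by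
    apply eq_of_sq_eq_sq
    · -- squares
      calc (2*V)^2 = (V^2 * PB) * ((2+X)^2 * uS) := by
            linear_combination (-(V^2))*hPB
        _ = (2+X)^2 * ut^2 := by rw [hVPB, one_mul, hut2]
        _ = ((2+X)*ut)^2 := by ring
    · rw [map_mul, map_mul, hV_def, constantCoeff_pcomp, constantCoeff_ev, hw0, hut0,
        map_add, constantCoeff_X, map_ofNat, add_zero]
    · rw [map_mul, hV_def, constantCoeff_pcomp, constantCoeff_ev, hw0, map_ofNat]
      norm_num
  -- GD
  set GD := X*A + (2*A - 1) * ev w with hGD_def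
  have hpc : pcomp GD (X*ut) = (X*ut)*P + (2*P - 1)*V := by
    rw [hGD_def, pcomp_add, pcomp_mul hfc, pcomp_X hfc, pcomp_mul hfc, pcomp_sub,
      pcomp_mul hfc, two_eq_C, pcomp_C, pcomp_one, ← two_eq_C, hP_def, hV_def]
  have hGDf : pcomp GD (X*ut) * d⁄dX ℚ (X*ut) = 1 := by
    apply mul_left_cancel₀ h2ne
    rw [mul_one]
    have hE : 2 * pcomp GD (X*ut) = ut * ((2+X)*(1+X)) := by
      rw [hpc]
      linear_combination (2*P - 1)*hV + ut*hP
    calc 2 * (pcomp GD (X*ut) * d⁄dX ℚ (X*ut))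
        = (2 * pcomp GD (X*ut)) * d⁄dX ℚ (X*ut) := by ring
      _ = ut * d⁄dX ℚ (X*ut) * ((2+X)*(1+X)) := by rw [hE]; ring
      _ = 2 := hfODE
  -- apply Lagrange inversion
  have hmain : coeff (2*m) H = coeff (2*m) GD := by
    rw [hHform]
    exact lagrange_core m ut GD hut0 hGDf
  rw [hmain, hGD_def, map_add]
  have hXA : coeff (2*m) (X*A) = 0 := by
    cases m with
    | zero =>
        rw [show 2*0 = 0 by ring, coeff_zero_eq_constantCoeff, map_mul, constantCoeff_X, zero_mul]
    | succ s =>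
        rw [show 2*(s+1) = (2*s+1)+1 by ring, mul_comm X A, coeff_succ_mul_X, hA_def,
          coeff_ev_odd]
  have hevrw : (2*A - 1) * ev w = ev ((2*exp ℚ - 1)*w) := by
    rw [ev_mul, ev_sub, ev_one, show (2:ℚ⟦X⟧)*exp ℚ = C 2 * exp ℚ by rw [two_eq_C],
      ev_mul, ev_C, ← two_eq_C, hA_def]
  rw [hXA, zero_add, hevrw, coeff_ev_even]
  congr 1
  rw [pow_mul, show ((1/2:ℚ))^2 = (4:ℚ)⁻¹ by norm_num, inv_pow]
end
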